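/- arXiv:1311.5317 — 6 statements merged into one kernel-verified Lean document; each statement's English description precedes it below -/
import Mathlib

section
/- If a graph G with vertex connectivity k admits k' pairwise vertex-disjoint dominating trees, then for any vertex r of G there exist k' spanning trees of G rooted at r such that for every vertex v, the paths from r to v in the different trees are internally vertex-disjoint (i.e., G has k' vertex independent spanning trees rooted at r). -/
open SimpleGraph

lemma lift_spanning {V : Type*} {G : SimpleGraph V} {t : G.Subgraph} :
    ∀ {a b : V} (w : t.spanningCoe.Walk a b) (ha : a ∈ t.verts) (hb : b ∈ t.verts),
      ∃ w' : t.coe.Walk ⟨a, ha⟩ ⟨b, hb⟩,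
        w'.map ⟨Subtype.val, fun {x y} h => h⟩ = w := by
  intro a b w
  induction w with
  | nil => exact fun ha hb => ⟨Walk.nil, rfl⟩
  | cons h q ih =>
    intro ha hb
    have hc := (Subgraph.Adj.snd_mem h)
    obtain ⟨q', hq'⟩ := ih hc hb
    exact ⟨Walk.cons (show t.coe.Adj ⟨_, ha⟩ ⟨_, hc⟩ from h) q', by simp [hq']⟩

lemma spanningCoe_acyclic {V : Type*} {G : SimpleGraph V} {t : G.Subgraph}
    (h : t.coe.IsAcyclic) : t.spanningCoe.IsAcyclic := by
  intro x c hc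
  cases c with
  | nil => exact hc.ne_nil rfl
  | cons hadj q =>
    have hx : x ∈ t.verts := Subgraph.Adj.fst_mem hadj
    obtain ⟨w', hw'⟩ := lift_spanning (Walk.cons hadj q) hx hx
    apply h w'
    have := hw' ▸ hc
    exact (Walk.map_isCycle_iff_of_injective Subtype.val_injective).mp this

lemma aux_tree {V : Type*} {G : SimpleGraph V} (t : G.Subgraph)
    (htree : t.coe.IsTree) (f : V → V)
    (hf_mem : ∀ v, f v ∈ t.verts)
    (hf_adj : ∀ v ∉ t.verts, G.Adj v (f v))
    (hf_eq : ∀ v ∈ t.verts, f v = v) (r : V) :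
    ∃ S : SimpleGraph V, S ≤ G ∧ S.IsTree ∧
      ∀ v, ∃ p : S.Path r v, ∀ u ∈ p.val.support, u = r ∨ u = v ∨ u ∈ t.verts := by
  classical
  set S : SimpleGraph V :=
    { Adj := fun x y => t.Adj x y ∨ (x ∉ t.verts ∧ y = f x) ∨ (y ∉ t.verts ∧ x = f y)
      symm := by
        constructor
        intro x y h
        rcases h with h | ⟨h1, h2⟩ | ⟨h1, h2⟩
        · exact Or.inl h.symm
        · exact Or.inr (Or.inr ⟨h1, h2⟩)
        · exact Or.inr (Or.inl ⟨h1, h2⟩)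
      loopless := by
        constructor
        intro x h
        rcases h with h | ⟨h1, h2⟩ | ⟨h1, h2⟩
        · exact h.ne rfl
        · exact h1 (h2 ▸ hf_mem x)
        · exact h1 (h2 ▸ hf_mem x) } with hS
  have hSadj : ∀ {x y}, S.Adj x y ↔
      (t.Adj x y ∨ (x ∉ t.verts ∧ y = f x) ∨ (y ∉ t.verts ∧ x = f y)) := Iff.rfl
  -- pendant uniqueness
  have hpend : ∀ {x y}, x ∉ t.verts → S.Adj x y → y = f x := by
    intro x y hx h
    rcases hSadj.mp h with h | ⟨h1, h2⟩ | ⟨h1, h2⟩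
    · exact absurd h.fst_mem hx
    · exact h2
    · exact absurd (h2 ▸ hf_mem y) hx
  have hinA : ∀ {x y}, x ∈ t.verts → y ∈ t.verts → S.Adj x y → t.Adj x y := by
    intro x y hx hy h
    rcases hSadj.mp h with h | ⟨h1, h2⟩ | ⟨h1, h2⟩
    · exact h
    · exact absurd hx h1
    · exact absurd hy h1
  have hSG : S ≤ G := by
    intro x y h
    rcases hSadj.mp h with h | ⟨h1, h2⟩ | ⟨h1, h2⟩
    · exact t.adj_sub h
    · exact h2 ▸ hf_adj x h1
    · exact (h2 ▸ hf_adj y h1).symm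
  -- walks inside the tree part
  have hwalkA : ∀ (a b : V) (ha : a ∈ t.verts) (hb : b ∈ t.verts),
      ∃ w : S.Walk a b, ∀ u ∈ w.support, u ∈ t.verts := by
    intro a b ha hb
    obtain ⟨w0⟩ := htree.isConnected ⟨a, ha⟩ ⟨b, hb⟩
    refine ⟨w0.map ⟨Subtype.val, fun {x y} h => Or.inl h⟩, ?_⟩
    intro u hu
    rw [Walk.support_map] at hu
    obtain ⟨x, hx, rfl⟩ := List.mem_map.mp hu
    exact x.2
  have hwalkTo : ∀ v : V, ∃ w : S.Walk v (f v), ∀ u ∈ w.support, u = v ∨ u ∈ t.verts := by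
    intro v
    by_cases h : v ∈ t.verts
    · refine ⟨Walk.nil.copy rfl (hf_eq v h).symm, ?_⟩
      intro u hu
      rw [Walk.support_copy] at hu
      simp at hu
      exact Or.inl hu
    · refine ⟨Walk.cons (hSadj.mpr (Or.inr (Or.inl ⟨h, rfl⟩))) Walk.nil, ?_⟩
      intro u hu
      simp at hu
      rcases hu with rfl | rfl
      · exact Or.inl rfl
      · exact Or.inr (hf_mem v)
  have hwalk : ∀ (a b : V), ∃ w : S.Walk a b,
      ∀ u ∈ w.support, u = a ∨ u = b ∨ u ∈ t.verts := by
    intro a b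
    obtain ⟨w1, h1⟩ := hwalkTo a
    obtain ⟨w2, h2⟩ := hwalkA (f a) (f b) (hf_mem a) (hf_mem b)
    obtain ⟨w3, h3⟩ := hwalkTo b
    refine ⟨w1.append (w2.append w3.reverse), ?_⟩
    intro u hu
    rw [Walk.mem_support_append_iff] at hu
    rcases hu with hu | hu
    · rcases h1 u hu with rfl | hu
      · exact Or.inl rfl
      · exact Or.inr (Or.inr hu)
    · rw [Walk.mem_support_append_iff] at hu
      rcases hu with hu | hu
      · exact Or.inr (Or.inr (h2 u hu))
      · rw [Walk.support_reverse, List.mem_reverse] at hu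
        rcases h3 u hu with rfl | hu
        · exact Or.inr (Or.inl rfl)
        · exact Or.inr (Or.inr hu)
  have hconn : S.Connected := by
    rw [connected_iff]
    refine ⟨fun a b => ⟨(hwalk a b).choose⟩, ⟨r⟩⟩
  have hacyc : S.IsAcyclic := by
    intro x c hc
    -- every support vertex of the cycle lies in t.verts
    have hsup : ∀ u ∈ c.support, u ∈ t.verts := by
      intro u hu
      by_contra hA
      have hc' := hc.rotate hu
      obtain ⟨b, hadj, q, hce⟩ := Walk.not_nil_iff.mp (hc.rotate hu).not_nil
      rw [hce] at hc'
      rw [Walk.cons_isCycle_iff] at hc'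
      have hb : b = f u := hpend hA hadj
      have hqrev : ¬ q.reverse.Nil := by
        intro hnil
        exact hA (hnil.eq ▸ (hb ▸ hf_mem u))
      obtain ⟨c2, hadj2, q2, hq2⟩ := Walk.not_nil_iff.mp hqrev
      have hc2 : c2 = f u := hpend hA hadj2
      have hmem : s(u, c2) ∈ q.reverse.edges := by rw [hq2]; simp
      rw [Walk.edges_reverse, List.mem_reverse] at hmem
      apply hc'.2
      rw [show s(u, b) = s(u, c2) from by rw [hb, hc2]]
      exact hmem
    have hedges : ∀ e ∈ c.edges, e ∈ t.spanningCoe.edgeSet := by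
      intro e he
      induction e with
      | h a b =>
        have hadj : S.Adj a b := c.adj_of_mem_edges he
        exact hinA (hsup a (c.fst_mem_support_of_mem_edges he))
          (hsup b (c.snd_mem_support_of_mem_edges he)) hadj
    exact spanningCoe_acyclic htree.IsAcyclic (c.transfer t.spanningCoe hedges)
      (hc.transfer hedges)
  refine ⟨S, hSG, ⟨hconn, hacyc⟩, ?_⟩
  intro v
  obtain ⟨w, hw⟩ := hwalk r v
  refine ⟨w.toPath, ?_⟩
  intro u hu
  exact hw u (w.support_toPath_subset hu)



/-- If a `k`-vertex-connected graph `G` admits `k'` pairwise vertex-disjoint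
dominating trees, then for any vertex `r` there are `k'` vertex independent
spanning trees rooted at `r`: spanning trees such that for every vertex `v`,
the `r`–`v` paths in the different trees are internally vertex-disjoint. -/
theorem stmt2 {V : Type*} [Fintype V] (G : SimpleGraph V) (k k' : ℕ) (hk : 1 ≤ k)
    (hconn : ∀ S : Set V, S.ncard < k → ((⊤ : G.Subgraph).deleteVerts S).coe.Connected)
    (T : Fin k' → G.Subgraph)
    (htree : ∀ i, (T i).coe.IsTree)
    (hdom : ∀ i, ∀ v ∉ (T i).verts, ∃ u ∈ (T i).verts, G.Adj v u)
    (hdisj : ∀ i j, i ≠ j → Disjoint (T i).verts (T j).verts)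
    (r : V) :
    ∃ T' : Fin k' → SimpleGraph V,
      (∀ i, T' i ≤ G ∧ (T' i).IsTree) ∧
      ∀ v : V, ∃ p : (i : Fin k') → (T' i).Path r v,
        ∀ i j, i ≠ j → ∀ u, u ∈ (p i).val.support → u ∈ (p j).val.support →
          u = r ∨ u = v := by
  classical
  have key : ∀ i : Fin k', ∃ S : SimpleGraph V, S ≤ G ∧ S.IsTree ∧
      ∀ v, ∃ p : S.Path r v, ∀ u ∈ p.val.support, u = r ∨ u = v ∨ u ∈ (T i).verts := by
    intro i
    have hne : ∀ v : V, ∃ u, u ∈ (T i).verts ∧ (v ∉ (T i).verts → G.Adj v u) ∧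
        (v ∈ (T i).verts → u = v) := by
      intro v
      by_cases h : v ∈ (T i).verts
      · exact ⟨v, h, fun h' => absurd h h', fun _ => rfl⟩
      · obtain ⟨u, hu, ha⟩ := hdom i v h
        exact ⟨u, hu, fun _ => ha, fun h' => absurd h' h⟩
    choose f hf1 hf2 hf3 using hne
    exact aux_tree (T i) (htree i) f hf1 hf2 hf3 r
  choose S hSG hStree hpath using key
  refine ⟨S, fun i => ⟨hSG i, hStree i⟩, ?_⟩
  intro v
  choose p hp using fun i => hpath i v
  refine ⟨p, ?_⟩
  intro i j hij u hui huj
  rcases hp i u hui with rfl | rfl | hi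
  · exact Or.inl rfl
  · exact Or.inr rfl
  · rcases hp j u huj with rfl | rfl | hj
    · exact Or.inl rfl
    · exact Or.inr rfl
    · exact absurd hj (Set.disjoint_left.mp (hdisj i j hij) hi)
end

section
/- A graph with vertex connectivity k can have at most k pairwise vertex-disjoint connected dominating sets. -/
/-- `S` is a connected dominating set of `G`. -/
def IsCDS {V : Type*} (G : SimpleGraph V) (S : Set V) : Prop :=
  (G.induce S).Connected ∧ ∀ v ∉ S, ∃ u ∈ S, G.Adj v u

/-- `S` is a vertex cut of `G`: removing `S` disconnects the graph. -/
def IsVertexCut {V : Type*} (G : SimpleGraph V) (S : Set V) : Prop :=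
  ¬ (G.induce Sᶜ).Connected

/-- A graph with vertex connectivity `k` (witnessed by a vertex cut of size `k`)
can have at most `k` pairwise vertex-disjoint connected dominating sets. -/
theorem stmt3 {V : Type*} [Fintype V] (G : SimpleGraph V) (hG : G.Connected) (k : ℕ)
    (S : Set V) (hcut : IsVertexCut G S) (hcard : S.ncard = k)
    (hmin : ∀ S' : Set V, IsVertexCut G S' → k ≤ S'.ncard)
    (m : ℕ) (C : Fin m → Set V)
    (hCDS : ∀ i, IsCDS G (C i))
    (hdisj : ∀ i j, i ≠ j → Disjoint (C i) (C j)) :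
    m ≤ k := by
  classical
  have key : ∀ i, ∃ s, s ∈ C i ∧ s ∈ S := by
    intro i
    by_contra h
    push_neg at h
    have hsub : C i ⊆ Sᶜ := fun v hv => h v hv
    apply hcut
    obtain ⟨hconn, hdom⟩ := hCDS i
    have hCne : (C i).Nonempty := by
      obtain ⟨⟨v, hv⟩⟩ := hconn.nonempty
      exact ⟨v, hv⟩
    let f : G.induce (C i) →g G.induce Sᶜ :=
      ⟨fun x => ⟨x.1, hsub x.2⟩, fun {a b} hab => hab⟩
    have reachC : ∀ v : ↥Sᶜ, ∃ u : ↥Sᶜ, u.1 ∈ C i ∧ (G.induce Sᶜ).Reachable v u := by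
      intro v
      by_cases hv : v.1 ∈ C i
      · exact ⟨v, hv, .refl _⟩
      · obtain ⟨u, huC, hadj⟩ := hdom v.1 hv
        exact ⟨⟨u, hsub huC⟩, huC, SimpleGraph.Adj.reachable hadj⟩
    obtain ⟨v0, hv0⟩ := hCne
    haveI : Nonempty ↥Sᶜ := ⟨⟨v0, hsub hv0⟩⟩
    refine SimpleGraph.Connected.mk ?_
    · intro a b
      obtain ⟨a', ha'C, ha'⟩ := reachC a
      obtain ⟨b', hb'C, hb'⟩ := reachC b
      have hmid : (G.induce Sᶜ).Reachable a' b' :=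
        (hconn.preconnected ⟨a'.1, ha'C⟩ ⟨b'.1, hb'C⟩).map f
      exact ha'.trans (hmid.trans hb'.symm)
  choose f hfC hfS using key
  have hinj : Function.Injective (fun i => (⟨f i, hfS i⟩ : ↥S)) := by
    intro i j hij
    by_contra hne
    have hval : f i = f j := congrArg Subtype.val hij
    exact Set.disjoint_left.mp (hdisj i j hne) (hfC i) (hval ▸ hfC j)
  have hle := Fintype.card_le_of_injective _ hinj
  rw [Fintype.card_fin] at hle
  rwa [← hcard, Set.ncard_eq_toFinset_card', Set.toFinset_card]
end

section
/- Let G be a k-vertex-connected graph and let D ⊆ V(G) be a dominating set. Let C be a subset of D such that G[C] is a union of connected components of G[D] and D \ C is nonempty. Then there exist k internally vertex-disjoint paths in G, each with at most two internal vertices, each having one endpoint in C and the other endpoint in D \ C, and with all internal vertices outside D. -/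
open SimpleGraph

section CALAux
variable {V : Type*} {G : SimpleGraph V} {D C : Set V}

private lemma cal_assemble {k : ℕ} (hCD : C ⊆ D) (x u v y : Fin k → V)
    (hx : ∀ i, x i ∈ C) (hy : ∀ i, y i ∈ D \ C)
    (hu : ∀ i, u i ∉ D) (hv : ∀ i, v i ∉ D)
    (h1 : ∀ i, G.Adj (x i) (u i))
    (h2 : ∀ i, u i = v i ∨ G.Adj (u i) (v i))
    (h3 : ∀ i, G.Adj (v i) (y i))
    (hdisj : ∀ i j, i ≠ j → u i ≠ u j ∧ u i ≠ v j ∧ v i ≠ u j ∧ v i ≠ v j) :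
    ∃ (s t : Fin k → V) (p : (i : Fin k) → G.Walk (s i) (t i)),
      (∀ i, (p i).IsPath) ∧
      (∀ i, s i ∈ C) ∧ (∀ i, t i ∈ D \ C) ∧
      (∀ i, (p i).length ≤ 3) ∧
      (∀ i, ∀ w ∈ (p i).support, w ≠ s i → w ≠ t i → w ∉ D) ∧
      (∀ i j, i ≠ j → ∀ w, w ∈ (p i).support → w ∈ (p j).support →
        (w = s i ∨ w = t i) ∧ (w = s j ∨ w = t j)) := by
  have hxD : ∀ i, x i ∈ D := fun i => hCD (hx i)
  have hyD : ∀ i, y i ∈ D := fun i => (hy i).1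
  have key : ∀ i, ∃ p : G.Walk (x i) (y i), p.IsPath ∧ p.length ≤ 3 ∧
      (p.support = [x i, u i, y i] ∨ p.support = [x i, u i, v i, y i]) := by
    intro i
    rcases h2 i with h | h
    · refine ⟨.cons (h1 i) (.cons (h ▸ h3 i) .nil), ?_, by simp, .inl (by simp)⟩
      rw [Walk.isPath_def]
      simp only [Walk.support_cons, Walk.support_nil, List.nodup_cons, List.mem_cons,
        List.mem_singleton, List.not_mem_nil, not_false_iff, List.nodup_nil, and_true]
      refine ⟨?_, ?_⟩
      · rintro (h' | h' | h')
        · exact hu i (h' ▸ hxD i)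
        · exact (hy i).2 (h' ▸ hx i)
        · exact h'.elim
      · rintro (h' | h')
        · exact hu i (h' ▸ hyD i)
        · exact h'.elim
    · refine ⟨.cons (h1 i) (.cons h (.cons (h3 i) .nil)), ?_, by simp, .inr (by simp)⟩
      rw [Walk.isPath_def]
      have hxu : x i ≠ u i := fun h' => hu i (h' ▸ hxD i)
      have hxv : x i ≠ v i := fun h' => hv i (h' ▸ hxD i)
      have hxy : x i ≠ y i := fun h' => (hy i).2 (h' ▸ hx i)
      have huy : u i ≠ y i := fun h' => hu i (h' ▸ hyD i)
      have hvy : v i ≠ y i := fun h' => hv i (h' ▸ hyD i)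
      simp [hxu, hxv, hxy, huy, hvy, h.ne]
  choose p hpath hlen hsupp using key
  refine ⟨x, y, p, hpath, hx, hy, hlen, ?_, ?_⟩
  · intro i w hw hws hwt
    rcases hsupp i with h | h <;> rw [h] at hw <;> simp at hw
    · rcases hw with h' | h' | h'
      · exact absurd h' hws
      · exact h' ▸ hu i
      · exact absurd h' hwt
    · rcases hw with h' | h' | h' | h'
      · exact absurd h' hws
      · exact h' ▸ hu i
      · exact h' ▸ hv i
      · exact absurd h' hwt
  · intro i j hij w hwi hwj
    have mem : ∀ l, w ∈ (p l).support → w = x l ∨ w = y l ∨ w = u l ∨ w = v l := by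
      intro l hl
      rcases hsupp l with h | h <;> rw [h] at hl <;> simp at hl <;> tauto
    have hi := mem i hwi
    have hj := mem j hwj
    have hint : ∀ l, (w = u l ∨ w = v l) → False := by
      intro l hl
      have hwD : w ∉ D := by rcases hl with h | h; exacts [h ▸ hu l, h ▸ hv l]
      have : ∀ m, w ∈ (p m).support → (w = u m ∨ w = v m) := by
        intro m hm
        rcases mem m hm with h | h | h | h
        · exact absurd (h ▸ hxD m) hwD
        · exact absurd (h ▸ hyD m) hwD
        · exact .inl h
        · exact .inr h
      have hii := this i hwi
      have hjj := this j hwj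
      obtain ⟨a, b, c, d⟩ := hdisj i j hij
      rcases hii with h | h <;> rcases hjj with h' | h' <;>
        [exact a (h ▸ h' ▸ rfl); exact b (h ▸ h' ▸ rfl); exact c (h ▸ h' ▸ rfl);
          exact d (h ▸ h' ▸ rfl)]
    constructor
    · rcases hi with h | h | h | h
      exacts [.inl h, .inr h, absurd (.inl h) (fun hh => hint i hh),
        absurd (.inr h) (fun hh => hint i hh)]
    · rcases hj with h | h | h | h
      exacts [.inl h, .inr h, absurd (.inl h) (fun hh => hint j hh),
        absurd (.inr h) (fun hh => hint j hh)]

private lemma cal_extract (S : Set V)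
    (hdom : ∀ v, v ∈ D ∨ ∃ u ∈ D, G.Adj v u)
    (hCcomp : ∀ u ∈ C, ∀ v ∈ D, G.Adj u v → v ∈ C) :
    ∀ {a b : V} (q : G.Walk a b), b ∈ D \ C → (∀ w ∈ q.support, w ∉ S) →
    (a ∈ C ∨ (a ∉ D ∧ a ∉ S ∧ ∃ x ∈ C, G.Adj x a)) →
    ∃ u v, (u ∉ D ∧ u ∉ S ∧ ∃ x ∈ C, G.Adj x u) ∧
      (v ∉ D ∧ v ∉ S ∧ ∃ y ∈ D \ C, G.Adj v y) ∧ (u = v ∨ G.Adj u v) := by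
  intro a b q
  induction q with
  | nil =>
    rintro hb _ (ha | ha)
    · exact absurd ha hb.2
    · exact absurd hb.1 ha.1
  | @cons a c b h q ih =>
    intro hb hsupp ha
    have hsupp' : ∀ w ∈ q.support, w ∉ S := fun w hw =>
      hsupp w (by rw [Walk.support_cons]; exact List.mem_cons_of_mem _ hw)
    have hcS : c ∉ S := hsupp' c q.start_mem_support
    rcases ha with ha | ⟨haD, haS, x, hx, hxa⟩
    · by_cases hcD : c ∈ D
      · exact ih hb hsupp' (.inl (hCcomp a ha c hcD h))
      · exact ih hb hsupp' (.inr ⟨hcD, hcS, a, ha, h⟩)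
    · by_cases hcD : c ∈ D
      · by_cases hcC : c ∈ C
        · exact ih hb hsupp' (.inl hcC)
        · exact ⟨a, a, ⟨haD, haS, x, hx, hxa⟩, ⟨haD, haS, c, ⟨hcD, hcC⟩, h⟩, .inl rfl⟩
      · rcases hdom c with hc | ⟨e, heD, hce⟩
        · exact absurd hc hcD
        · by_cases heC : e ∈ C
          · exact ih hb hsupp' (.inr ⟨hcD, hcS, e, heC, hce.symm⟩)
          · exact ⟨a, c, ⟨haD, haS, x, hx, hxa⟩, ⟨hcD, hcS, e, ⟨heD, heC⟩, hce⟩, .inr h⟩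

end CALAux

private lemma cal_konig {V : Type*} [Fintype V] [DecidableEq V] (A' B' : Finset V)
    (R : V → V → Prop) [DecidableRel R] (t : ℕ)
    (hc : ∀ cov : Finset V, (∀ a ∈ A', ∀ b ∈ B', R a b → a ∈ cov ∨ b ∈ cov) → t ≤ cov.card) :
    ∃ aa bb : Fin t → V, Function.Injective aa ∧ Function.Injective bb ∧
      ∀ i, aa i ∈ A' ∧ bb i ∈ B' ∧ R (aa i) (bb i) := by
  classical
  have htA : t ≤ A'.card := hc A' (fun a ha _ _ _ => .inl ha)
  set d := A'.card - t with hd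
  set tfun : {a // a ∈ A'} → Finset (V ⊕ Fin d) :=
    fun a => ((B'.filter (R a.1)).image Sum.inl) ∪ (Finset.univ.image Sum.inr) with htfun
  have hall : ∀ s : Finset {a // a ∈ A'}, s.card ≤ (s.biUnion tfun).card := by
    intro s
    rcases s.eq_empty_or_nonempty with rfl | hne
    · simp
    by_contra hlt
    push_neg at hlt
    set s₀ : Finset V := s.image Subtype.val with hs₀
    have hs₀card : s₀.card = s.card := Finset.card_image_of_injective _ Subtype.val_injective
    have hs₀sub : s₀ ⊆ A' := by
      intro a ha
      rw [hs₀, Finset.mem_image] at ha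
      obtain ⟨a', _, rfl⟩ := ha
      exact a'.2
    set Ns : Finset V := s₀.biUnion (fun a => B'.filter (R a)) with hNs
    have hbi : s.biUnion tfun = Ns.image Sum.inl ∪ Finset.univ.image Sum.inr := by
      obtain ⟨a₀, ha₀⟩ := hne
      apply Finset.Subset.antisymm
      · intro z hz
        rw [Finset.mem_biUnion] at hz
        obtain ⟨a, has, hz⟩ := hz
        rw [htfun, Finset.mem_union] at hz
        rcases hz with hz | hz
        · rw [Finset.mem_image] at hz
          obtain ⟨b, hb, rfl⟩ := hz
          refine Finset.mem_union_left _ (Finset.mem_image_of_mem _ ?_)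
          rw [hNs, Finset.mem_biUnion]
          exact ⟨a.1, Finset.mem_image_of_mem _ has, hb⟩
        · exact Finset.mem_union_right _ hz
      · intro z hz
        rw [Finset.mem_union] at hz
        rw [Finset.mem_biUnion]
        rcases hz with hz | hz
        · rw [Finset.mem_image] at hz
          obtain ⟨b, hb, rfl⟩ := hz
          rw [hNs, Finset.mem_biUnion] at hb
          obtain ⟨a, has₀, hb⟩ := hb
          rw [hs₀, Finset.mem_image] at has₀
          obtain ⟨a', ha's, rfl⟩ := has₀
          exact ⟨a', ha's, by
            rw [htfun]; exact Finset.mem_union_left _ (Finset.mem_image_of_mem _ hb)⟩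
        · exact ⟨a₀, ha₀, by rw [htfun]; exact Finset.mem_union_right _ hz⟩
    have hdisj : Disjoint (Ns.image (Sum.inl : V → V ⊕ Fin d)) (Finset.univ.image Sum.inr) := by
      rw [Finset.disjoint_left]
      intro z hz hz'
      rw [Finset.mem_image] at hz hz'
      obtain ⟨b, _, rfl⟩ := hz
      obtain ⟨j, _, hj⟩ := hz'
      exact Sum.inl_ne_inr hj.symm
    have hcard : (s.biUnion tfun).card = Ns.card + d := by
      rw [hbi, Finset.card_union_of_disjoint hdisj,
        Finset.card_image_of_injective _ Sum.inl_injective,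
        Finset.card_image_of_injective _ Sum.inr_injective, Finset.card_univ, Fintype.card_fin]
    have hcov : t ≤ ((A' \ s₀) ∪ Ns).card := by
      apply hc
      intro a ha b hb hr
      by_cases has : a ∈ s₀
      · exact .inr (Finset.mem_union_right _ (by
          rw [hNs, Finset.mem_biUnion]
          exact ⟨a, has, Finset.mem_filter.2 ⟨hb, hr⟩⟩))
      · exact .inl (Finset.mem_union_left _ (Finset.mem_sdiff.2 ⟨ha, has⟩))
    have h1 : ((A' \ s₀) ∪ Ns).card ≤ (A'.card - s₀.card) + Ns.card := by
      calc ((A' \ s₀) ∪ Ns).card ≤ (A' \ s₀).card + Ns.card := Finset.card_union_le _ _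
      _ = (A'.card - s₀.card) + Ns.card := by rw [Finset.card_sdiff_of_subset hs₀sub]
    have h2 : s₀.card ≤ A'.card := Finset.card_le_card hs₀sub
    rw [hcard] at hlt
    omega
  obtain ⟨f, hfinj, hf⟩ := (Finset.all_card_le_biUnion_card_iff_exists_injective tfun).mp hall
  set good : Finset {a // a ∈ A'} := Finset.univ.filter (fun a => (f a).isLeft) with hgood
  have hbadcard : (Finset.univ.filter (fun a : {a // a ∈ A'} => ¬(f a).isLeft)).card ≤ d := by
    calc (Finset.univ.filter (fun a : {a // a ∈ A'} => ¬(f a).isLeft)).card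
        ≤ ((Finset.univ : Finset (Fin d)).image (Option.some)).card := by
          apply Finset.card_le_card_of_injOn (fun a => (f a).getRight?)
          · intro a ha
            rw [Finset.mem_coe, Finset.mem_filter] at ha
            rcases hfa : f a with w | j
            · rw [hfa] at ha; simp at ha
            · simp [hfa]
          · intro a₁ h₁ a₂ h₂ heq
            rw [Finset.mem_coe, Finset.mem_filter] at h₁ h₂
            rcases h₁' : f a₁ with w | j₁
            · rw [h₁'] at h₁; simp at h₁
            rcases h₂' : f a₂ with w | j₂
            · rw [h₂'] at h₂; simp at h₂
            simp only [h₁', h₂'] at heq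
            simp at heq
            exact hfinj (by rw [h₁', h₂', heq])
      _ ≤ d := by
          calc ((Finset.univ : Finset (Fin d)).image (Option.some)).card
              ≤ (Finset.univ : Finset (Fin d)).card := Finset.card_image_le
            _ = d := by rw [Finset.card_univ, Fintype.card_fin]
  have hsplit := Finset.card_filter_add_card_filter_not
    (s := (Finset.univ : Finset {a // a ∈ A'})) (p := fun a => (f a).isLeft)
  rw [Finset.card_univ, Fintype.card_coe] at hsplit
  have hgc : good.card + (Finset.univ.filter (fun a : {a // a ∈ A'} => ¬(f a).isLeft)).card
      = A'.card := by rw [hgood]; exact hsplit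
  have hgoodcard : t ≤ good.card := by omega
  obtain ⟨s, hssub, hscard⟩ := Finset.exists_subset_card_eq hgoodcard
  have hgoodspec : ∀ a : {a // a ∈ A'}, a ∈ good → ∃ w, f a = Sum.inl w ∧ w ∈ B' ∧ R a.1 w := by
    intro a ha
    have := hf a
    rw [htfun, Finset.mem_union] at this
    rcases this with h | h
    · rw [Finset.mem_image] at h
      obtain ⟨w, hw, hfw⟩ := h
      rw [Finset.mem_filter] at hw
      exact ⟨w, hfw.symm, hw.1, hw.2⟩
    · rw [Finset.mem_image] at h
      obtain ⟨j, _, hfw⟩ := h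
      rw [hgood, Finset.mem_filter] at ha
      rw [← hfw] at ha
      simp at ha
  choose w hw1 hw2 hw3 using hgoodspec
  set e : Fin t → {x // x ∈ s} := fun i => s.equivFin.symm (Fin.cast hscard.symm i) with he
  refine ⟨fun i => ((e i).1 : {a // a ∈ A'}).1, fun i => w (e i).1 (hssub (e i).2), ?_, ?_, ?_⟩
  · intro i j hij
    exact Fin.cast_injective _ (s.equivFin.symm.injective
      (Subtype.val_injective (Subtype.val_injective hij)))
  · intro i j hij
    have h1 : f (e i).1 = f (e j).1 := by
      rw [hw1 _ (hssub (e i).2), hw1 _ (hssub (e j).2)]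
      exact congrArg _ hij
    have h2 : e i = e j := Subtype.val_injective (hfinj h1)
    exact Fin.cast_injective _ (s.equivFin.symm.injective h2)
  · intro i
    exact ⟨((e i).1 : {a // a ∈ A'}).2, hw2 _ (hssub (e i).2), hw3 _ (hssub (e i).2)⟩

/-- Connector Abundance Lemma: let `G` be `k`-vertex-connected, `D` a dominating
set, and `C ⊆ D` a nonempty union of connected components of `G[D]` with
`D \ C` nonempty. Then there are `k` internally vertex-disjoint paths, each with
at most two internal vertices (length ≤ 3), each from `C` to `D \ C`, with all
internal vertices outside `D`. -/
theorem stmt4 {V : Type*} [Fintype V] (G : SimpleGraph V) (k : ℕ)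
    (hconn : ∀ S : Set V, S.ncard < k → ((⊤ : G.Subgraph).deleteVerts S).coe.Connected)
    (D : Set V) (hdom : ∀ v, v ∈ D ∨ ∃ u ∈ D, G.Adj v u)
    (C : Set V) (hCD : C ⊆ D) (hCne : C.Nonempty)
    (hCcomp : ∀ u ∈ C, ∀ v ∈ D, G.Adj u v → v ∈ C)
    (hDC : (D \ C).Nonempty) :
    ∃ (s t : Fin k → V) (p : (i : Fin k) → G.Walk (s i) (t i)),
      (∀ i, (p i).IsPath) ∧
      (∀ i, s i ∈ C) ∧ (∀ i, t i ∈ D \ C) ∧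
      (∀ i, (p i).length ≤ 3) ∧
      (∀ i, ∀ u ∈ (p i).support, u ≠ s i → u ≠ t i → u ∉ D) ∧
      (∀ i j, i ≠ j → ∀ u, u ∈ (p i).support → u ∈ (p j).support →
        (u = s i ∨ u = t i) ∧ (u = s j ∨ u = t j)) := by
  classical
  obtain ⟨c0, hc0⟩ := hCne
  obtain ⟨d0, hd0⟩ := hDC
  set PA : V → Prop := fun w => w ∉ D ∧ ∃ x ∈ C, G.Adj x w with hPA
  set PB : V → Prop := fun w => w ∉ D ∧ ∃ y ∈ D \ C, G.Adj w y with hPB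
  -- the oracle derived from connectivity
  have oracle : ∀ S : Finset V, (∀ w ∈ S, w ∉ D) → S.card < k →
      ∃ u v, PA u ∧ PB v ∧ u ∉ S ∧ v ∉ S ∧ (u = v ∨ G.Adj u v) := by
    intro S hSD hScard
    have hScard' : (↑S : Set V).ncard < k := by rwa [Set.ncard_coe_finset]
    have hconnS := hconn ↑S hScard'
    have hc0S : c0 ∉ (↑S : Set V) := fun h => hSD c0 h (hCD hc0)
    have hd0S : d0 ∉ (↑S : Set V) := fun h => hSD d0 h hd0.1
    obtain ⟨q⟩ := hconnS ⟨c0, ⟨trivial, hc0S⟩⟩ ⟨d0, ⟨trivial, hd0S⟩⟩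
    have hsup : ∀ w ∈ (q.map ((⊤ : G.Subgraph).deleteVerts ↑S).hom).support,
        w ∉ (↑S : Set V) := by
      intro w hw
      rw [Walk.support_map, List.mem_map] at hw
      obtain ⟨w', _, rfl⟩ := hw
      exact w'.2.2
    obtain ⟨u, v, ⟨hu1, hu2, hu3⟩, ⟨hv1, hv2, hv3⟩, huv⟩ :=
      cal_extract ↑S hdom hCcomp (q.map ((⊤ : G.Subgraph).deleteVerts ↑S).hom) hd0 hsup
        (.inl hc0)
    exact ⟨u, v, ⟨hu1, hu3⟩, ⟨hv1, hv3⟩, hu2, hv2, huv⟩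
  -- it suffices to find the quadruple data
  suffices hsuff : ∃ uu vv : Fin k → V, (∀ i, PA (uu i)) ∧ (∀ i, PB (vv i)) ∧
      (∀ i, uu i = vv i ∨ G.Adj (uu i) (vv i)) ∧
      (∀ i j, i ≠ j → uu i ≠ uu j ∧ uu i ≠ vv j ∧ vv i ≠ uu j ∧ vv i ≠ vv j) by
    obtain ⟨uu, vv, hPAuu, hPBvv, h2, hdisj⟩ := hsuff
    choose xx hxxC hxxadj using fun i => (hPAuu i).2
    choose yy hyyDC hyyadj using fun i => (hPBvv i).2
    exact cal_assemble hCD xx uu vv yy hxxC hyyDC (fun i => (hPAuu i).1)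
      (fun i => (hPBvv i).1) hxxadj h2 hyyadj hdisj
  set Lam : Finset V := Finset.univ.filter (fun w => PA w ∧ PB w) with hLam
  have hLamspec : ∀ w ∈ Lam, PA w ∧ PB w := by
    intro w hw; rw [hLam, Finset.mem_filter] at hw; exact hw.2
  have hLamD : ∀ w ∈ Lam, w ∉ D := fun w hw => (hLamspec w hw).1.1
  by_cases hk : k ≤ Lam.card
  · -- enough loops
    set g : Fin k → V := fun i => (Lam.equivFin.symm (Fin.castLE hk i) : V) with hg
    have hginj : Function.Injective g := by
      intro i j hij
      exact Fin.castLE_injective hk (Lam.equivFin.symm.injective (Subtype.val_injective hij))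
    have hgLam : ∀ i, g i ∈ Lam := fun i => (Lam.equivFin.symm (Fin.castLE hk i)).2
    refine ⟨g, g, fun i => (hLamspec _ (hgLam i)).1, fun i => (hLamspec _ (hgLam i)).2,
      fun i => .inl rfl, ?_⟩
    intro i j hij
    have : g i ≠ g j := fun h => hij (hginj h)
    exact ⟨this, this, this, this⟩
  · push_neg at hk
    set r := Lam.card with hr
    set A' : Finset V := Finset.univ.filter (fun w => PA w ∧ ¬ PB w) with hA'
    set B' : Finset V := Finset.univ.filter (fun w => PB w ∧ ¬ PA w) with hB'
    have hA'spec : ∀ w ∈ A', PA w ∧ ¬ PB w := by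
      intro w hw; rw [hA', Finset.mem_filter] at hw; exact hw.2
    have hB'spec : ∀ w ∈ B', PB w ∧ ¬ PA w := by
      intro w hw; rw [hB', Finset.mem_filter] at hw; exact hw.2
    have hcover : ∀ cov : Finset V,
        (∀ a ∈ A', ∀ b ∈ B', G.Adj a b → a ∈ cov ∨ b ∈ cov) → k - r ≤ cov.card := by
      intro cov hcov
      by_contra hlt
      push_neg at hlt
      set S : Finset V := Lam ∪ ((cov.filter (fun w => w ∉ D))) with hS
      have hSD : ∀ w ∈ S, w ∉ D := by
        intro w hw
        rw [hS, Finset.mem_union] at hw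
        rcases hw with hw | hw
        · exact hLamD w hw
        · exact (Finset.mem_filter.mp hw).2
      have hScard : S.card < k := by
        have h1 : S.card ≤ Lam.card + (cov.filter (fun w => w ∉ D)).card :=
          Finset.card_union_le _ _
        have h2 : (cov.filter (fun w => w ∉ D)).card ≤ cov.card := Finset.card_filter_le _ _
        omega
      obtain ⟨u, v, hPAu, hPBv, huS, hvS, huv⟩ := oracle S hSD hScard
      have huLam : u ∉ Lam := fun h => huS (by rw [hS]; exact Finset.mem_union_left _ h)
      have hvLam : v ∉ Lam := fun h => hvS (by rw [hS]; exact Finset.mem_union_left _ h)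
      have huB : ¬ PB u := fun h =>
        huLam (by rw [hLam]; exact Finset.mem_filter.2 ⟨Finset.mem_univ _, hPAu, h⟩)
      have hvA : ¬ PA v := fun h =>
        hvLam (by rw [hLam]; exact Finset.mem_filter.2 ⟨Finset.mem_univ _, h, hPBv⟩)
      have huA' : u ∈ A' := by
        rw [hA']; exact Finset.mem_filter.2 ⟨Finset.mem_univ _, hPAu, huB⟩
      have hvB' : v ∈ B' := by
        rw [hB']; exact Finset.mem_filter.2 ⟨Finset.mem_univ _, hPBv, hvA⟩
      have hadj : G.Adj u v := by
        rcases huv with rfl | h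
        · exact absurd hPBv huB
        · exact h
      rcases hcov u huA' v hvB' hadj with h | h
      · exact huS (by rw [hS]; exact Finset.mem_union_right _ (Finset.mem_filter.2 ⟨h, hPAu.1⟩))
      · exact hvS (by rw [hS]; exact Finset.mem_union_right _ (Finset.mem_filter.2 ⟨h, hPBv.1⟩))
    obtain ⟨aa, bb, haainj, hbbinj, haabb⟩ := cal_konig A' B' G.Adj (k - r) hcover
    -- combine loops and matching edges
    set loopf : Fin r → V := fun i => (Lam.equivFin.symm (Fin.cast hr.symm i) : V) with hloopf
    have hloopinj : Function.Injective loopf := by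
      intro i j hij
      exact Fin.cast_injective _ (Lam.equivFin.symm.injective (Subtype.val_injective hij))
    have hloopLam : ∀ i, loopf i ∈ Lam := fun i => (Lam.equivFin.symm (Fin.cast hr.symm i)).2
    have hidx : ∀ i : Fin k, ¬ (i : ℕ) < r → (i : ℕ) - r < k - r := by
      intro i h; have := i.2; omega
    set uu : Fin k → V := fun i =>
      if h : (i : ℕ) < r then loopf ⟨i, h⟩ else aa ⟨(i : ℕ) - r, hidx i h⟩ with huu
    set vv : Fin k → V := fun i =>
      if h : (i : ℕ) < r then loopf ⟨i, h⟩ else bb ⟨(i : ℕ) - r, hidx i h⟩ with hvv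
    have hPAuu : ∀ i, PA (uu i) := by
      intro i
      simp only [huu]
      by_cases h : (i : ℕ) < r
      · simp only [dif_pos h]; exact (hLamspec _ (hloopLam _)).1
      · simp only [dif_neg h]; exact (hA'spec _ (haabb _).1).1
    have hPBvv : ∀ i, PB (vv i) := by
      intro i
      simp only [hvv]
      by_cases h : (i : ℕ) < r
      · simp only [dif_pos h]; exact (hLamspec _ (hloopLam _)).2
      · simp only [dif_neg h]; exact (hB'spec _ (haabb _).2.1).1
    have h2 : ∀ i, uu i = vv i ∨ G.Adj (uu i) (vv i) := by
      intro i
      simp only [huu, hvv]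
      by_cases h : (i : ℕ) < r
      · simp only [dif_pos h]; exact .inl trivial
      · simp only [dif_neg h]; exact .inr (haabb _).2.2
    -- the four kinds of points and their mutual distinctness
    have hne1 : ∀ w w', PA w → ¬ PA w' → w ≠ w' := fun w w' h h' he => h' (he ▸ h)
    have hne2 : ∀ w w', PB w → ¬ PB w' → w ≠ w' := fun w w' h h' he => h' (he ▸ h)
    refine ⟨uu, vv, hPAuu, hPBvv, h2, ?_⟩
    intro i j hij
    have hvalne : (i : ℕ) ≠ (j : ℕ) := fun h => hij (Fin.ext h)
    simp only [huu, hvv]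
    by_cases hi : (i : ℕ) < r <;> by_cases hj : (j : ℕ) < r
    · simp only [dif_pos hi, dif_pos hj]
      have : loopf ⟨i, hi⟩ ≠ loopf ⟨j, hj⟩ := by
        intro h
        have h2 := hloopinj h
        simp only [Fin.mk.injEq] at h2
        exact hvalne h2
      exact ⟨this, this, this, this⟩
    · simp only [dif_pos hi, dif_neg hj]
      have hL := hLamspec _ (hloopLam ⟨i, hi⟩)
      have ha := hA'spec _ (haabb ⟨(j : ℕ) - r, hidx j hj⟩).1
      have hb := hB'spec _ (haabb ⟨(j : ℕ) - r, hidx j hj⟩).2.1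
      exact ⟨hne2 _ _ hL.2 ha.2, hne1 _ _ hL.1 hb.2, hne2 _ _ hL.2 ha.2, hne1 _ _ hL.1 hb.2⟩
    · simp only [dif_neg hi, dif_pos hj]
      have hL := hLamspec _ (hloopLam ⟨j, hj⟩)
      have ha := hA'spec _ (haabb ⟨(i : ℕ) - r, hidx i hi⟩).1
      have hb := hB'spec _ (haabb ⟨(i : ℕ) - r, hidx i hi⟩).2.1
      exact ⟨(hne2 _ _ hL.2 ha.2).symm, (hne2 _ _ hL.2 ha.2).symm,
        (hne1 _ _ hL.1 hb.2).symm, (hne1 _ _ hL.1 hb.2).symm⟩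
    · simp only [dif_neg hi, dif_neg hj]
      have hsubne : (⟨(i : ℕ) - r, hidx i hi⟩ : Fin (k - r)) ≠ ⟨(j : ℕ) - r, hidx j hj⟩ := by
        intro h
        have := congrArg Fin.val h
        simp only at this
        omega
      have hai := hA'spec _ (haabb ⟨(i : ℕ) - r, hidx i hi⟩).1
      have haj := hA'spec _ (haabb ⟨(j : ℕ) - r, hidx j hj⟩).1
      have hbi := hB'spec _ (haabb ⟨(i : ℕ) - r, hidx i hi⟩).2.1
      have hbj := hB'spec _ (haabb ⟨(j : ℕ) - r, hidx j hj⟩).2.1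
      refine ⟨fun h => hsubne (haainj h), hne1 _ _ hai.1 hbj.2,
        (hne1 _ _ haj.1 hbi.2).symm, fun h => hsubne (hbbinj h)⟩
end

section
/- Let G be a k-vertex-connected graph, let D be a dominating set of G, and let u, v be vertices with u in one connected component of G[D] and v in a different connected component of G[D]. Then any path in G between the two components can be shortened to a path with at most two internal vertices, none of which lie in D, connecting the component of u to D minus that component. -/
/-- Path-shortening lemma: in a `k`-vertex-connected graph `G` with dominating
set `D`, if `u` and `v` lie in different connected components of `G[D]` and `C`
is the component of `u`, then any `u`–`v` path can be shortened to a path with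
at most two internal vertices (length ≤ 3), none of which lie in `D`, from `C`
to `D \ C`, whose internal vertices all lie on the original path. -/
theorem stmt5 {V : Type*} [Fintype V] (G : SimpleGraph V) (k : ℕ)
    (hconn : ∀ S : Set V, S.ncard < k → ((⊤ : G.Subgraph).deleteVerts S).coe.Connected)
    (D : Set V) (hdom : ∀ v, v ∈ D ∨ ∃ u ∈ D, G.Adj v u)
    (u v : V) (hu : u ∈ D) (hv : v ∈ D)
    (C : Set V)
    (hC : C = {w | ∃ hw : w ∈ D, (G.induce D).Reachable ⟨u, hu⟩ ⟨w, hw⟩})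
    (hvC : v ∉ C)
    (p0 : G.Walk u v) (hp0 : p0.IsPath) :
    ∃ (s t : V) (p : G.Walk s t), p.IsPath ∧ s ∈ C ∧ t ∈ D \ C ∧
      p.length ≤ 3 ∧
      (∀ w ∈ p.support, w ≠ s → w ≠ t → w ∉ D) ∧
      (∀ w ∈ p.support, w ∉ D → w ∈ p0.support) := by
  have hCD : C ⊆ D := by
    rintro w hw; rw [hC] at hw; exact hw.1
  have huC : u ∈ C := by
    rw [hC]; exact ⟨hu, SimpleGraph.Reachable.refl _⟩
  -- if a ∈ C, b ∈ D, G.Adj a b then b ∈ C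
  have hstep : ∀ a b, a ∈ C → b ∈ D → G.Adj a b → b ∈ C := by
    intro a b haC hbD hab
    rw [hC] at haC ⊢
    obtain ⟨haD, hr⟩ := haC
    refine ⟨hbD, hr.trans ?_⟩
    exact SimpleGraph.Adj.reachable (by exact hab : (G.induce D).Adj ⟨a, haD⟩ ⟨b, hbD⟩)
  have key : ∀ (a : V) (p : G.Walk a v),
      (a ∈ C ∨ (a ∉ D ∧ ∃ c ∈ C, G.Adj c a)) →
      ∃ (s t : V) (q : G.Walk s t), q.IsPath ∧ s ∈ C ∧ t ∈ D \ C ∧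
        q.length ≤ 3 ∧
        (∀ w ∈ q.support, w ≠ s → w ≠ t → w ∉ D) ∧
        (∀ w ∈ q.support, w ∉ D → w ∈ p.support) := by
    intro a p
    induction p with
    | nil =>
      rintro (haC | ⟨haD, _⟩)
      · exact absurd haC hvC
      · exact absurd hv haD
    | @cons a b v hab q ih =>
      intro ha
      by_cases hb : b ∈ C ∨ (b ∉ D ∧ ∃ c ∈ C, G.Adj c b)
      · obtain ⟨s, t, q', h1, h2, h3, h4, h5, h6⟩ := ih hv hvC p0 hp0 hb
        refine ⟨s, t, q', h1, h2, h3, h4, h5, fun w hw hwD => ?_⟩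
        simp only [SimpleGraph.Walk.support_cons, List.mem_cons]
        exact Or.inr (h6 w hw hwD)
      · push_neg at hb
        obtain ⟨hbC, hb2⟩ := hb
        by_cases hbD : b ∈ D
        · -- b ∈ D \ C : target found
          rcases ha with haC | ⟨haD, c, hcC, hca⟩
          · refine ⟨a, b, .cons hab .nil, ?_, haC, ⟨hbD, hbC⟩, by simp, ?_, ?_⟩
            · simp [hab.ne]
            · intro w hw hws hwt
              simp only [SimpleGraph.Walk.support_cons, SimpleGraph.Walk.support_nil,
                List.mem_cons, List.mem_singleton] at hw
              rcases hw with rfl | rfl | h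
              · exact absurd rfl hws
              · exact absurd rfl hwt
              · simp at h
            · intro w hw hwD
              simp only [SimpleGraph.Walk.support_cons, SimpleGraph.Walk.support_nil,
                List.mem_cons, List.mem_singleton] at hw
              rcases hw with rfl | rfl | h
              · exact absurd (hCD haC) hwD
              · exact absurd hbD hwD
              · simp at h
          · -- path c - a - b
            have hcD : c ∈ D := hCD hcC
            have hcb : c ≠ b := fun h => hbC (h ▸ hcC)
            refine ⟨c, b, .cons hca (.cons hab .nil), ?_, hcC, ⟨hbD, hbC⟩, by simp, ?_, ?_⟩
            · simp [SimpleGraph.Walk.isPath_def, hca.ne, hab.ne, hcb]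
            · intro w hw hws hwt
              simp only [SimpleGraph.Walk.support_cons, SimpleGraph.Walk.support_nil,
                List.mem_cons, List.mem_singleton] at hw
              rcases hw with rfl | rfl | rfl | h
              · exact absurd rfl hws
              · exact haD
              · exact absurd rfl hwt
              · simp at h
            · intro w hw hwD
              simp only [SimpleGraph.Walk.support_cons, SimpleGraph.Walk.support_nil,
                List.mem_cons, List.mem_singleton] at hw
              simp only [SimpleGraph.Walk.support_cons, List.mem_cons]
              rcases hw with rfl | rfl | rfl | h
              · exact absurd hcD hwD
              · exact Or.inl rfl
              · exact absurd hbD hwD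
              · simp at h
        · -- b ∉ D, dominated by some d ∈ D, necessarily d ∉ C
          rcases hdom b with h | ⟨d, hdD, hbd⟩
          · exact absurd h hbD
          have hdC : d ∉ C := fun hdC => hb2 hbD d hdC hbd.symm
          rcases ha with haC | ⟨haD, c, hcC, hca⟩
          · -- path a - b - d
            have haD : a ∈ D := hCD haC
            have had : a ≠ d := fun h => hdC (h ▸ haC)
            refine ⟨a, d, .cons hab (.cons hbd .nil), ?_, haC, ⟨hdD, hdC⟩, by simp, ?_, ?_⟩
            · simp [SimpleGraph.Walk.isPath_def, hab.ne, hbd.ne, had]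
            · intro w hw hws hwt
              simp only [SimpleGraph.Walk.support_cons, SimpleGraph.Walk.support_nil,
                List.mem_cons, List.mem_singleton] at hw
              rcases hw with rfl | rfl | rfl | h
              · exact absurd rfl hws
              · exact hbD
              · exact absurd rfl hwt
              · simp at h
            · intro w hw hwD
              simp only [SimpleGraph.Walk.support_cons, SimpleGraph.Walk.support_nil,
                List.mem_cons, List.mem_singleton] at hw
              simp only [SimpleGraph.Walk.support_cons, List.mem_cons]
              rcases hw with rfl | rfl | rfl | h
              · exact absurd haD hwD
              · exact Or.inr q.start_mem_support
              · exact absurd hdD hwD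
              · simp at h
          · -- path c - a - b - d
            have hcD : c ∈ D := hCD hcC
            have hcd : c ≠ d := fun h => hdC (h ▸ hcC)
            have hcb : c ≠ b := fun h => hbD (h ▸ hcD)
            have had : a ≠ d := fun h => haD (h ▸ hdD)
            refine ⟨c, d, .cons hca (.cons hab (.cons hbd .nil)), ?_, hcC, ⟨hdD, hdC⟩,
              by simp, ?_, ?_⟩
            · simp [SimpleGraph.Walk.isPath_def, hca.ne, hab.ne, hbd.ne, hcd, hcb, had]
            · intro w hw hws hwt
              simp only [SimpleGraph.Walk.support_cons, SimpleGraph.Walk.support_nil,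
                List.mem_cons, List.mem_singleton] at hw
              rcases hw with rfl | rfl | rfl | rfl | h
              · exact absurd rfl hws
              · exact haD
              · exact hbD
              · exact absurd rfl hwt
              · simp at h
            · intro w hw hwD
              simp only [SimpleGraph.Walk.support_cons, SimpleGraph.Walk.support_nil,
                List.mem_cons, List.mem_singleton] at hw
              simp only [SimpleGraph.Walk.support_cons, List.mem_cons]
              rcases hw with rfl | rfl | rfl | rfl | h
              · exact absurd hcD hwD
              · exact Or.inl rfl
              · exact Or.inr q.start_mem_support
              · exact absurd hdD hwD
              · simp at h
  exact key u p0 (Or.inl huC)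
end

section
/- Let Z be a nonnegative-integer-valued random variable such that E[Z] ≥ z_0 for a constant z_0 > 1, and suppose that for every integer ζ ≥ 1, Pr[Z = ζ] ≤ (4e·z_0/ζ)^ζ. Then Pr[Z ≥ 1] ≥ 1/20 − 1/2^{10}; in particular Pr[Z ≥ 1] ≥ δ for some absolute constant δ > 0. -/
set_option maxHeartbeats 1000000

open Finset

private lemma aux_le_pow (k : ℕ) (hk : 21 ≤ k) : (k : ℝ) ≤ 1.2 ^ k := by
  induction k, hk using Nat.le_induction with
  | base => norm_num
  | succ n hn ih =>
    have hn' : (21:ℝ) ≤ n := by exact_mod_cast hn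
    push_cast
    have h1 : (n:ℝ) + 1 ≤ 1.2 * n := by nlinarith
    calc (n:ℝ) + 1 ≤ 1.2 * n := h1
      _ ≤ 1.2 * 1.2 ^ n := by nlinarith
      _ = 1.2 ^ (n+1) := by ring

/-- Tail bound used in the Fast Merger Lemma: if `Z` is an `ℕ`-valued random
variable (given by its distribution `p`) with `E[Z] ≥ z₀ > 1` and
`Pr[Z = ζ] ≤ (4e·z₀/ζ)^ζ` for all `ζ ≥ 1`, then
`Pr[Z ≥ 1] = 1 − p 0 ≥ 1/20 − 1/2^10 > 0`. -/
theorem stmt6 (p : ℕ → ℝ) (z0 : ℝ)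
    (hp0 : ∀ n, 0 ≤ p n) (hp1 : (∑' n : ℕ, p n) = 1)
    (hsum : Summable (fun n : ℕ => (n : ℝ) * p n))
    (hz0 : 1 < z0)
    (hE : z0 ≤ ∑' n : ℕ, (n : ℝ) * p n)
    (htail : ∀ ζ : ℕ, 1 ≤ ζ → p ζ ≤ (4 * Real.exp 1 * z0 / ζ) ^ ζ) :
    1 / 20 - 1 / 2 ^ 10 ≤ 1 - p 0 ∧ ∃ δ : ℝ, 0 < δ ∧ δ ≤ 1 - p 0 := by
  have hz0pos : (0:ℝ) < z0 := lt_trans one_pos hz0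
  have hsump : Summable p := by
    by_contra h
    rw [tsum_eq_zero_of_not_summable h] at hp1
    norm_num at hp1
  set M : ℕ := ⌈(20 * z0 : ℝ)⌉₊ with hMdef
  have hM20 : (20 * z0 : ℝ) ≤ M := Nat.le_ceil _
  have hM21 : 21 ≤ M := by
    have h20 : (20:ℝ) < M := by nlinarith
    have : 20 < M := by exact_mod_cast h20
    omega
  have hMlt : (M:ℝ) < 20 * z0 + 1 :=
    Nat.ceil_lt_add_one (by positivity)
  have he : Real.exp 1 < 2.75 := lt_trans Real.exp_one_lt_d9 (by norm_num)
  have hepos : 0 < Real.exp 1 := Real.exp_pos 1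
  -- key tail pointwise bound
  have hkey : ∀ k : ℕ, M ≤ k → (k:ℝ) * p k ≤ (0.66:ℝ) ^ k := by
    intro k hk
    have hk21 : 21 ≤ k := le_trans hM21 hk
    have hkpos : (0:ℝ) < k := by
      have : 0 < k := by omega
      exact_mod_cast this
    have hkR : (20*z0 : ℝ) ≤ k := le_trans hM20 (by exact_mod_cast hk)
    have hratio : 4 * Real.exp 1 * z0 / k ≤ Real.exp 1 / 5 := by
      rw [div_le_div_iff₀ hkpos (by norm_num)]
      nlinarith [mul_le_mul_of_nonneg_left hkR hepos.le]
    have hnn : (0:ℝ) ≤ 4 * Real.exp 1 * z0 / k := by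
      apply div_nonneg _ hkpos.le
      nlinarith
    have h1 : p k ≤ (Real.exp 1 / 5) ^ k :=
      le_trans (htail k (by omega)) (pow_le_pow_left₀ hnn hratio k)
    calc (k:ℝ) * p k ≤ (k:ℝ) * (Real.exp 1 / 5) ^ k :=
          mul_le_mul_of_nonneg_left h1 hkpos.le
      _ ≤ 1.2 ^ k * (Real.exp 1 / 5) ^ k :=
          mul_le_mul_of_nonneg_right (aux_le_pow k hk21) (by positivity)
      _ = (1.2 * (Real.exp 1 / 5)) ^ k := (mul_pow _ _ _).symm
      _ ≤ (0.66:ℝ) ^ k := by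
          apply pow_le_pow_left₀ (by positivity)
          nlinarith
  -- tail sum bound
  have hgsum : Summable (fun n : ℕ => (0.66:ℝ) ^ (n + M)) := by
    simp_rw [pow_add]
    exact (summable_geometric_of_lt_one (by norm_num) (by norm_num)).mul_right _
  have hshift : Summable (fun n : ℕ => ((n + M : ℕ) : ℝ) * p (n + M)) :=
    (summable_nat_add_iff M).2 hsum
  have hT : (∑' n : ℕ, ((n + M : ℕ) : ℝ) * p (n + M)) ≤ (5:ℝ)/256 := by
    have h1 : (∑' n : ℕ, ((n + M : ℕ) : ℝ) * p (n + M))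
        ≤ ∑' n : ℕ, (0.66:ℝ) ^ (n + M) :=
      Summable.tsum_le_tsum (fun n => hkey (n + M) (Nat.le_add_left _ _)) hshift hgsum
    have h2 : (∑' n : ℕ, (0.66:ℝ) ^ (n + M)) = (1 - 0.66)⁻¹ * 0.66 ^ M := by
      simp_rw [pow_add]
      rw [tsum_mul_right, tsum_geometric_of_lt_one (by norm_num) (by norm_num)]
    have h3 : (0.66:ℝ) ^ M ≤ 0.66 ^ 21 :=
      pow_le_pow_of_le_one (by norm_num) (by norm_num) hM21
    have h4 : ((1:ℝ) - 0.66)⁻¹ * 0.66 ^ 21 ≤ 5/256 := by norm_num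
    calc (∑' n : ℕ, ((n + M : ℕ) : ℝ) * p (n + M))
        ≤ (1 - 0.66)⁻¹ * 0.66 ^ M := by rw [← h2]; exact h1
      _ ≤ (1 - 0.66)⁻¹ * 0.66 ^ 21 := by
          apply mul_le_mul_of_nonneg_left h3 (by norm_num)
      _ ≤ 5/256 := h4
  -- split the expectation
  have hsplit := Summable.sum_add_tsum_nat_add (f := fun n : ℕ => (n:ℝ) * p n) M hsum
  have hE' : z0 ≤ (∑ i ∈ range M, (i:ℝ) * p i)
      + ∑' n : ℕ, ((n + M : ℕ) : ℝ) * p (n + M) := by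
    rw [hsplit]; exact hE
  -- p 0 ≤ 1
  have hp0le : p 0 ≤ 1 := by
    rw [← hp1]
    exact Summable.le_tsum hsump 0 (fun j _ => hp0 j)
  have h1mp0 : 0 ≤ 1 - p 0 := by linarith
  -- the rest of the mass
  have hrest : (∑' n : ℕ, p (n + 1)) = 1 - p 0 := by
    have h := Summable.tsum_eq_zero_add hsump
    rw [hp1] at h
    linarith
  -- finite sum bound
  have hFin : (∑ i ∈ range M, (i:ℝ) * p i) ≤ ((M:ℝ) - 1) * (1 - p 0) := by
    obtain ⟨M', hM'⟩ : ∃ m, M = m + 1 := ⟨M - 1, by omega⟩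
    rw [hM', Finset.sum_range_succ']
    push_cast
    simp only [Nat.cast_zero, zero_mul, add_zero]
    have step1 : (∑ i ∈ range M', ((i:ℝ) + 1) * p (i + 1))
        ≤ ∑ i ∈ range M', (M':ℝ) * p (i + 1) := by
      apply Finset.sum_le_sum
      intro i hi
      have hi' : i + 1 ≤ M' := Nat.succ_le_of_lt (mem_range.1 hi)
      have hc : ((i:ℝ) + 1) ≤ (M':ℝ) := by exact_mod_cast hi'
      exact mul_le_mul_of_nonneg_right hc (hp0 _)
    have step2 : (∑ i ∈ range M', (M':ℝ) * p (i + 1))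
        = (M':ℝ) * ∑ i ∈ range M', p (i + 1) := by
      rw [Finset.mul_sum]
    have step3 : (∑ i ∈ range M', p (i + 1)) ≤ 1 - p 0 := by
      rw [← hrest]
      exact Summable.sum_le_tsum _ (fun i _ => hp0 _) ((summable_nat_add_iff 1).2 hsump)
    have hM'nn : (0:ℝ) ≤ M' := Nat.cast_nonneg _
    calc (∑ i ∈ range M', ((i:ℝ) + 1) * p (i + 1))
        ≤ (M':ℝ) * ∑ i ∈ range M', p (i + 1) := by rw [← step2]; exact step1
      _ ≤ (M':ℝ) * (1 - p 0) := mul_le_mul_of_nonneg_left step3 hM'nn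
      _ = ((M':ℝ) + 1 - 1) * (1 - p 0) := by ring
  -- combine
  have hcore : z0 - 5/256 ≤ 20 * z0 * (1 - p 0) := by
    have hMm1 : ((M:ℝ) - 1) ≤ 20 * z0 := by linarith
    have : ((M:ℝ) - 1) * (1 - p 0) ≤ 20 * z0 * (1 - p 0) :=
      mul_le_mul_of_nonneg_right hMm1 h1mp0
    linarith
  have hmain : 1 / 20 - 1 / 2 ^ 10 ≤ 1 - p 0 := by
    rw [show (1 / 20 - 1 / 2 ^ 10 : ℝ) = 251/5120 by norm_num]
    nlinarith [hcore, hz0, h1mp0]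
  exact ⟨hmain, ⟨1/20 - 1/2^10, by norm_num, hmain⟩⟩
end

section
/- Let G be a graph with m edges and edge connectivity λ. Then G contains at least ⌈(λ−1)/2⌉ pairwise edge-disjoint spanning trees. -/
namespace NWPack
open Relation

variable {V : Type*}

/-- Connectivity relation generated by a set of (undirected) edges. -/
def conn (S : Set (Sym2 V)) : V → V → Prop :=
  Relation.ReflTransGen (fun a b => s(a, b) ∈ S)

lemma conn.refl {S : Set (Sym2 V)} (x : V) : conn S x x := ReflTransGen.refl

lemma conn.symm {S : Set (Sym2 V)} {x y : V} (h : conn S x y) : conn S y x := by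
  refine (@ReflTransGen.stdSymm _ (fun a b => s(a, b) ∈ S) ⟨?_⟩).symm _ _ h
  intro a b hab
  rwa [Sym2.eq_swap]

lemma conn.trans {S : Set (Sym2 V)} {x y z : V} (h : conn S x y) (h' : conn S y z) :
    conn S x z := ReflTransGen.trans h h'

lemma conn.step {S : Set (Sym2 V)} {x y : V} (h : s(x, y) ∈ S) : conn S x y :=
  ReflTransGen.single h

lemma conn.mono {S T : Set (Sym2 V)} (hST : S ⊆ T) {x y : V} (h : conn S x y) :
    conn T x y := ReflTransGen.mono (fun a b hab => hST hab) _ _ h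

/-- Replace each edge-step of a `conn S` walk by a `conn T` connection. -/
lemma conn.elim {S T : Set (Sym2 V)} {x y : V} (h : conn S x y)
    (hrep : ∀ a b, s(a, b) ∈ S → conn T a b) : conn T x y := by
  induction h with
  | refl => exact conn.refl x
  | tail _ hbc ih => exact ih.trans (hrep _ _ hbc)

/-- Decomposition of connectivity after inserting an edge. -/
lemma conn_insert {S : Set (Sym2 V)} {u v x y : V}
    (h : conn (insert s(u, v) S) x y) :
    conn S x y ∨ (conn S x u ∧ conn S v y) ∨ (conn S x v ∧ conn S u y) := by
  induction h with
  | refl => exact Or.inl (conn.refl x)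
  | @tail b c _ hbc ih =>
    rcases hbc with heq | hmem
    · -- s(b,c) = s(u,v)
      rw [Sym2.eq_iff] at heq
      rcases heq with ⟨hb, hc⟩ | ⟨hb, hc⟩
      · subst hb; subst hc
        rcases ih with h1 | ⟨h1, h2⟩ | ⟨h1, h2⟩
        · exact Or.inr (Or.inl ⟨h1, conn.refl _⟩)
        · exact Or.inr (Or.inl ⟨h1, conn.refl _⟩)
        · exact Or.inl h1
      · subst hb; subst hc
        rcases ih with h1 | ⟨h1, h2⟩ | ⟨h1, h2⟩
        · exact Or.inr (Or.inr ⟨h1, conn.refl _⟩)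
        · exact Or.inl h1
        · exact Or.inr (Or.inr ⟨h1, conn.refl _⟩)
    · rcases ih with h1 | ⟨h1, h2⟩ | ⟨h1, h2⟩
      · exact Or.inl (h1.trans (conn.step hmem))
      · exact Or.inr (Or.inl ⟨h1, h2.trans (conn.step hmem)⟩)
      · exact Or.inr (Or.inr ⟨h1, h2.trans (conn.step hmem)⟩)

lemma conn_empty {x y : V} (h : conn (∅ : Set (Sym2 V)) x y) : x = y := by
  induction h with
  | refl => rfl
  | tail _ hbc _ => exact absurd hbc (Set.notMem_empty _)

/-- A set of edges is a forest iff every edge is a bridge. -/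
def IsForest (S : Set (Sym2 V)) : Prop :=
  ∀ x y, s(x, y) ∈ S → ¬ conn (S \ {s(x, y)}) x y

lemma IsForest.mono {S T : Set (Sym2 V)} (hT : IsForest T) (hST : S ⊆ T) : IsForest S := by
  intro x y hxy hc
  exact hT x y (hST hxy) (hc.mono (Set.diff_subset_diff_left hST))

lemma IsForest.insert_edge {S : Set (Sym2 V)} (hS : IsForest S) {u v : V}
    (huv : ¬ conn S u v) : IsForest (insert s(u, v) S) := by
  have huvS : s(u, v) ∉ S := fun h => huv (conn.step h)
  intro x y hxy hc
  rcases Set.mem_insert_iff.1 hxy with heq | hmem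
  · -- the new edge
    have hins : insert s(u, v) S \ {s(x, y)} = S := by
      rw [heq, Set.insert_diff_of_mem _ (Set.mem_singleton _)]
      apply Set.diff_singleton_eq_self
      exact huvS
    rw [hins] at hc
    rw [Sym2.eq_iff] at heq
    rcases heq with ⟨hb, hc'⟩ | ⟨hb, hc'⟩
    · subst hb; subst hc'; exact huv hc
    · subst hb; subst hc'; exact huv hc.symm
  · have hne : s(x, y) ≠ s(u, v) := fun h => huvS (h ▸ hmem)
    have hrw : insert s(u, v) S \ {s(x, y)} = insert s(u, v) (S \ {s(x, y)}) := by
      rw [Set.insert_diff_of_notMem _ (by simpa using hne.symm)]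
    rw [hrw] at hc
    rcases conn_insert hc with h1 | ⟨h1, h2⟩ | ⟨h1, h2⟩
    · exact hS x y hmem h1
    · exact huv (((h1.symm.mono Set.diff_subset).trans (conn.step hmem)).trans
        (h2.symm.mono Set.diff_subset))
    · exact huv (((h2.mono Set.diff_subset).trans ((conn.step hmem).symm)).trans
        (h1.mono Set.diff_subset))


/-- Extract a minimal connecting subset of edges. -/
lemma exists_minimal_conn [DecidableEq (Sym2 V)] (S : Finset (Sym2 V)) {x y : V} (h : conn (↑S) x y) :
    ∃ S' ⊆ S, conn (↑S') x y ∧ ∀ f ∈ S', ¬ conn (↑(S'.erase f)) x y := by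
  classical
  induction S using Finset.strongInduction with
  | _ S ih =>
    by_cases hex : ∃ f ∈ S, conn (↑(S.erase f)) x y
    · obtain ⟨f, hf, h'⟩ := hex
      obtain ⟨S', hsub, hc, hmin⟩ := ih (S.erase f) (Finset.erase_ssubset hf) h'
      exact ⟨S', hsub.trans (Finset.erase_subset _ _), hc, hmin⟩
    · push_neg at hex
      exact ⟨S, subset_rfl, h, hex⟩

/-- In a forest, each edge of a minimal connecting set is a bridge for the pair
in the whole forest. -/
lemma bridge_of_minimal [DecidableEq (Sym2 V)] {T S' : Finset (Sym2 V)}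
    (hT : IsForest (↑T : Set (Sym2 V))) (hsub : S' ⊆ T)
    {x y : V} (hc : conn (↑S') x y) (hmin : ∀ f ∈ S', ¬ conn (↑(S'.erase f)) x y)
    {f : Sym2 V} (hf : f ∈ S') : ¬ conn (↑T \ {f}) x y := by
  classical
  induction f using Sym2.inductionOn with
  | hf a b =>
    intro hcon
    have hSins : (↑S' : Set (Sym2 V)) = insert s(a, b) (↑(S'.erase s(a, b))) := by
      rw [Finset.coe_erase, Set.insert_diff_singleton, Set.insert_eq_self.2 (by exact_mod_cast hf)]
    rw [hSins] at hc
    have hsub' : (↑(S'.erase s(a, b)) : Set (Sym2 V)) ⊆ ↑T \ {s(a, b)} := by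
      rw [Finset.coe_erase]
      exact Set.diff_subset_diff_left (Finset.coe_subset.2 hsub)
    rcases conn_insert hc with h1 | ⟨h1, h2⟩ | ⟨h1, h2⟩
    · exact hmin _ hf h1
    · -- x ~ a, b ~ y in S'.erase ; then a ~ b in T \ {e}
      exact hT a b (hsub hf) (((h1.mono hsub').symm.trans hcon).trans (h2.mono hsub').symm)
    · exact hT a b (hsub hf)
        (((h2.mono hsub').trans hcon.symm).trans (h1.mono hsub'))

section Counting

variable [Fintype V]

/-- The setoid of connectivity classes. -/
def connSetoid (S : Set (Sym2 V)) : Setoid V :=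
  ⟨conn S, ⟨conn.refl, conn.symm, conn.trans⟩⟩

/-- Number of connected components (classes of `conn S`). -/
noncomputable def ccount (S : Set (Sym2 V)) : ℕ :=
  Nat.card (Quotient (connSetoid S))

lemma ccount_congr {S T : Set (Sym2 V)} (h : ∀ x y, conn S x y ↔ conn T x y) :
    ccount S = ccount T := by
  have : connSetoid S = connSetoid T := Setoid.ext h
  unfold ccount
  rw [this]

lemma ccount_empty : ccount (∅ : Set (Sym2 V)) = Fintype.card V := by
  unfold ccount
  rw [← Nat.card_eq_fintype_card]
  refine (Nat.card_eq_of_bijective (Quotient.mk _) ⟨?_, Quotient.exists_rep⟩).symm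
  intro a b hab
  exact conn_empty (Quotient.exact hab)

lemma ccount_pos [Nonempty V] (S : Set (Sym2 V)) : 1 ≤ ccount S := by
  have : Nonempty (Quotient (connSetoid S)) := Nonempty.map (Quotient.mk _) ‹Nonempty V›
  exact Nat.card_pos

lemma ccount_le_card (S : Set (Sym2 V)) : ccount S ≤ Fintype.card V := by
  rw [← Nat.card_eq_fintype_card]
  exact Nat.card_le_card_of_surjective (Quotient.mk _) Quotient.exists_rep

private noncomputable def theta (S : Set (Sym2 V)) (u v : V) :
    Quotient (connSetoid S) → Quotient (connSetoid (insert s(u, v) S)) ⊕ Unit :=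
  fun q => by
    classical
    exact if q = Quotient.mk _ u then Sum.inr Unit.unit
      else Sum.inl (Quotient.map' id (fun a b hab => conn.mono (Set.subset_insert _ _) hab) q)

lemma theta_injective (S : Set (Sym2 V)) (u v : V) : Function.Injective (theta S u v) := by
  classical
  intro q1 q2 heq
  unfold theta at heq
  by_cases h1 : q1 = Quotient.mk _ u <;> by_cases h2 : q2 = Quotient.mk _ u <;>
    simp only [h1, h2, if_pos, if_neg, if_true, if_false, reduceIte] at heq
  · rw [h1, h2]
  · exact absurd heq (by simp)
  · exact absurd heq (by simp)
  · -- both inl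
    obtain ⟨a, ha⟩ := Quotient.exists_rep q1
    obtain ⟨b, hb⟩ := Quotient.exists_rep q2
    subst ha; subst hb
    simp only [Quotient.map'_mk'', id_eq, Sum.inl.injEq] at heq
    have hab : conn (insert s(u, v) S) a b := Quotient.exact heq
    rcases conn_insert hab with h | ⟨ha', hb'⟩ | ⟨ha', hb'⟩
    · exact Quotient.sound h
    · exact absurd (Quotient.sound ha' : _ = Quotient.mk (connSetoid S) u) h1
    · exact absurd (Quotient.sound hb'.symm : _ = Quotient.mk (connSetoid S) u) h2

lemma ccount_le_insert (S : Set (Sym2 V)) (u v : V) :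
    ccount S ≤ ccount (insert s(u, v) S) + 1 := by
  have := Nat.card_le_card_of_injective _ (theta_injective S u v)
  simpa [Nat.card_sum, ccount] using this

lemma theta_surjective (S : Set (Sym2 V)) (u v : V) (huv : ¬ conn S u v) :
    Function.Surjective (theta S u v) := by
  classical
  intro r
  rcases r with r | u'
  · obtain ⟨a, ha⟩ := Quotient.exists_rep r
    by_cases hau : conn S a u
    · refine ⟨Quotient.mk _ v, ?_⟩
      have hvu : ¬ (Quotient.mk (connSetoid S) v = Quotient.mk (connSetoid S) u) := by
        intro h
        exact huv (Quotient.exact h).symm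
      unfold theta
      rw [if_neg hvu]
      congr 1
      rw [← ha]
      apply Quotient.sound
      show conn (insert s(u, v) S) v a
      exact ((conn.step (Set.mem_insert _ _)).symm.trans
        ((hau.symm.mono (Set.subset_insert _ _)))) 
    · refine ⟨Quotient.mk _ a, ?_⟩
      unfold theta
      rw [if_neg (fun h => hau (Quotient.exact h))]
      rw [← ha]
      rfl
  · exact ⟨Quotient.mk _ u, by unfold theta; rw [if_pos rfl]⟩

lemma ccount_insert_eq (S : Set (Sym2 V)) (u v : V) (huv : ¬ conn S u v) :
    ccount S = ccount (insert s(u, v) S) + 1 := by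
  have hb : Function.Bijective (theta S u v) :=
    ⟨theta_injective S u v, theta_surjective S u v huv⟩
  have := Nat.card_eq_of_bijective _ hb
  simpa [Nat.card_sum, ccount] using this

/-- Lower bound: `n ≤ c(S) + |S|`. -/
lemma card_le_ccount_add_card (S : Finset (Sym2 V)) :
    Fintype.card V ≤ ccount (↑S : Set (Sym2 V)) + S.card := by
  classical
  induction S using Finset.induction with
  | empty => simp [ccount_empty]
  | @insert f S hfS ih =>
    induction f using Sym2.inductionOn with
    | hf u v =>
      rw [Finset.card_insert_of_notMem hfS, Finset.coe_insert]
      have h1 : ccount (↑S : Set (Sym2 V)) ≤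
          ccount (insert s(u, v) (↑S : Set (Sym2 V))) + 1 := ccount_le_insert _ _ _
      have h2 := ih
      omega

/-- For forests: `c(S) + |S| = n`. -/
lemma forest_ccount_add_card (S : Finset (Sym2 V)) (hS : IsForest (↑S : Set (Sym2 V))) :
    ccount (↑S : Set (Sym2 V)) + S.card = Fintype.card V := by
  classical
  induction S using Finset.induction with
  | empty => simp [ccount_empty]
  | @insert f S hfS ih =>
    induction f using Sym2.inductionOn with
    | hf u v =>
      have hforS : IsForest (↑S : Set (Sym2 V)) :=
        hS.mono (by exact_mod_cast Finset.subset_insert _ _)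
      have hnc : ¬ conn (↑S) u v := by
        have := hS u v (by simp)
        intro hcon
        apply this
        have : (insert s(u, v) (↑S : Set (Sym2 V))) \ {s(u, v)} = ↑S \ {s(u, v)} := by
          simp [Set.insert_diff_of_mem]
        rw [Finset.coe_insert, this, Set.diff_singleton_eq_self (by exact_mod_cast hfS)]
        exact hcon
      have heq := ccount_insert_eq (↑S) u v hnc
      rw [Finset.card_insert_of_notMem hfS, Finset.coe_insert]
      have := ih hforS
      omega

lemma conn_of_ccount_eq_one {S : Set (Sym2 V)} (h : ccount S = 1) (x y : V) : conn S x y := by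
  unfold ccount at h
  have hsub : Subsingleton (Quotient (connSetoid S)) := (Nat.card_eq_one_iff_unique.1 h).1
  exact Quotient.exact (Subsingleton.elim (Quotient.mk (connSetoid S) x) (Quotient.mk (connSetoid S) y))

end Counting


section Family

variable {k : ℕ} (G : SimpleGraph V)

/-- A valid family: `k` pairwise edge-disjoint forests inside `G`. -/
def Valid (F : Fin k → Finset (Sym2 V)) : Prop :=
  (∀ i, (↑(F i) : Set (Sym2 V)) ⊆ G.edgeSet ∧ IsForest (↑(F i) : Set (Sym2 V))) ∧
  ∀ i j, i ≠ j → ∀ e, e ∈ F i → e ∉ F j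

def total (F : Fin k → Finset (Sym2 V)) : ℕ := ∑ i, (F i).card

lemma exists_max_family [Fintype V] :
    ∃ F0 : Fin k → Finset (Sym2 V), Valid G F0 ∧
      ∀ F : Fin k → Finset (Sym2 V), Valid G F → total F ≤ total F0 := by
  classical
  set T : Set ℕ := {m | ∃ F : Fin k → Finset (Sym2 V), Valid G F ∧ total F = m} with hT
  have hne : T.Nonempty := by
    have hforest_empty : IsForest (↑(∅ : Finset (Sym2 V)) : Set (Sym2 V)) := by
      intro x y h
      simp at h
    exact ⟨0, fun _ => ∅, ⟨fun i => ⟨by simp, hforest_empty⟩,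
      fun i j _ e he => by simp at he⟩, by simp [total]⟩
  have hbdd : BddAbove T := by
    refine ⟨k * (G.edgeSet).ncard, ?_⟩
    rintro m ⟨F, hF, rfl⟩
    have hle : ∀ i, (F i).card ≤ (G.edgeSet).ncard := by
      intro i
      rw [← Set.ncard_coe_finset]
      exact Set.ncard_le_ncard (hF.1 i).1 (Set.toFinite _)
    calc total F ≤ ∑ _i : Fin k, (G.edgeSet).ncard := Finset.sum_le_sum (fun i _ => hle i)
      _ = k * (G.edgeSet).ncard := by simp [Finset.sum_const, mul_comm]
  obtain ⟨F0, hF0, htot⟩ := Nat.sSup_mem hne hbdd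
  exact ⟨F0, hF0, fun F hF => htot ▸ le_csSup hbdd ⟨F, hF, rfl⟩⟩

variable {G}

lemma total_update {F : Fin k → Finset (Sym2 V)} {i : Fin k} (B : Finset (Sym2 V)) :
    total (Function.update F i B) + (F i).card = total F + B.card := by
  classical
  have h1 : total (Function.update F i B) =
      B.card + ∑ j ∈ Finset.univ.erase i, (F j).card := by
    rw [total, ← Finset.add_sum_erase _ _ (Finset.mem_univ i), Function.update_self]
    congr 1
    exact Finset.sum_congr rfl
      (fun j hj => by rw [Function.update_of_ne (Finset.mem_erase.1 hj).1])
  have h2 : total F = (F i).card + ∑ j ∈ Finset.univ.erase i, (F j).card :=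
    (Finset.add_sum_erase _ _ (Finset.mem_univ i)).symm
  omega

/-- Maximality: an unused edge has connected endpoints in every forest. -/
lemma conn_of_max {F0 F : Fin k → Finset (Sym2 V)}
    (hmax : ∀ F' : Fin k → Finset (Sym2 V), Valid G F' → total F' ≤ total F0)
    (hF : Valid G F) (htot : total F = total F0)
    {e : Sym2 V} (he : e ∈ G.edgeSet) (hno : ∀ i, e ∉ F i) (i : Fin k)
    {x y : V} (hxy : e = s(x, y)) : conn (↑(F i) : Set (Sym2 V)) x y := by
  classical
  subst hxy
  by_contra hnc
  set F' := Function.update F i (insert s(x, y) (F i)) with hF'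
  have hval : Valid G F' := by
    constructor
    · intro j
      by_cases hj : j = i
      · subst hj
        rw [hF', Function.update_self, Finset.coe_insert]
        exact ⟨Set.insert_subset he (hF.1 j).1, (hF.1 j).2.insert_edge hnc⟩
      · rw [hF', Function.update_of_ne hj]
        exact hF.1 j
    · intro j j' hne e' hej
      by_cases hj : j = i <;> by_cases hj' : j' = i
      · exact absurd (hj.trans hj'.symm) hne
      · subst hj
        rw [hF', Function.update_of_ne hj']
        rw [hF', Function.update_self, Finset.mem_insert] at hej
        rcases hej with rfl | hej
        · exact hno j'
        · exact hF.2 _ _ hne _ hej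
      · subst hj'
        rw [hF', Function.update_of_ne hj] at hej
        rw [hF', Function.update_self, Finset.mem_insert]
        push_neg
        exact ⟨fun h => hno j (h ▸ hej), hF.2 _ _ hne _ hej⟩
      · rw [hF', Function.update_of_ne hj']
        rw [hF', Function.update_of_ne hj] at hej
        exact hF.2 _ _ hne _ hej
  have htot' : total F' = total F + 1 := by
    have hc1 := total_update (F := F) (i := i) (insert s(x, y) (F i))
    rw [Finset.card_insert_of_notMem (hno i), ← hF'] at hc1
    omega
  have := hmax F' hval
  omega

/-- Reachable (family, active edge) pairs by exchange moves, starting from `F0`. -/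
inductive Reach [DecidableEq (Sym2 V)] (G : SimpleGraph V) (F0 : Fin k → Finset (Sym2 V)) :
    (Fin k → Finset (Sym2 V)) → Sym2 V → Prop
  | base {e : Sym2 V} (he : e ∈ G.edgeSet) (hno : ∀ i, e ∉ F0 i) : Reach G F0 F0 e
  | step {F : Fin k → Finset (Sym2 V)} {e f : Sym2 V} {i : Fin k} {x y : V}
      (h : Reach G F0 F e) (hf : f ∈ F i) (hxy : e = s(x, y))
      (hcut : ¬ conn (↑((F i).erase f) : Set (Sym2 V)) x y) :
      Reach G F0 (Function.update F i (insert e ((F i).erase f))) f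

/-- The set of active edges. -/
def ASet [DecidableEq (Sym2 V)] (G : SimpleGraph V) (F0 : Fin k → Finset (Sym2 V)) :
    Set (Sym2 V) := {e | ∃ F, Reach G F0 F e}

/-- The active part of the `i`-th initial forest. -/
def genSet [DecidableEq (Sym2 V)] (G : SimpleGraph V) (F0 : Fin k → Finset (Sym2 V))
    (i : Fin k) : Set (Sym2 V) := {g | g ∈ F0 i ∧ g ∈ ASet G F0}

/-- Invariants carried along reachability. -/
def Inv [DecidableEq (Sym2 V)] (G : SimpleGraph V) (F0 F : Fin k → Finset (Sym2 V))
    (e : Sym2 V) : Prop :=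
  Valid G F ∧ total F = total F0 ∧ e ∈ G.edgeSet ∧ (∀ i, e ∉ F i) ∧
  (∀ i, ∀ g ∈ F i, g ∉ F0 i → ∀ x y, g = s(x, y) → conn (genSet G F0 i) x y)

/-- Key claim: an active edge has its ends connected within the active part of
EVERY initial forest. -/
lemma claim_of_inv [DecidableEq (Sym2 V)] {F0 F : Fin k → Finset (Sym2 V)}
    (hmax : ∀ F' : Fin k → Finset (Sym2 V), Valid G F' → total F' ≤ total F0)
    {e : Sym2 V} (h : Reach G F0 F e) (hinv : Inv G F0 F e) :
    ∀ i, ∀ x y, e = s(x, y) → conn (genSet G F0 i) x y := by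
  obtain ⟨hval, htot, heE, hno, hinv7⟩ := hinv
  intro i x y hxy
  have hce : conn (↑(F i) : Set (Sym2 V)) x y :=
    conn_of_max hmax hval htot heE hno i hxy
  obtain ⟨S', hsub, hc, hmin⟩ := exists_minimal_conn (F i) hce
  refine hc.elim (fun a b hab => ?_)
  have hfS : s(a, b) ∈ S' := hab
  have hbridge : ¬ conn ((↑(F i) : Set (Sym2 V)) \ {s(a, b)}) x y :=
    bridge_of_minimal (hval.1 i).2 hsub hc hmin hfS
  have hcut : ¬ conn (↑((F i).erase s(a, b)) : Set (Sym2 V)) x y := by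
    rw [Finset.coe_erase]; exact hbridge
  have hA : s(a, b) ∈ ASet G F0 := ⟨_, Reach.step h (hsub hfS) hxy hcut⟩
  by_cases hg : s(a, b) ∈ F0 i
  · exact conn.step ⟨hg, hA⟩
  · exact hinv7 i _ (hsub hfS) hg a b rfl

lemma reach_inv [DecidableEq (Sym2 V)] {F0 : Fin k → Finset (Sym2 V)}
    (hF0 : Valid G F0)
    (hmax : ∀ F' : Fin k → Finset (Sym2 V), Valid G F' → total F' ≤ total F0)
    {F : Fin k → Finset (Sym2 V)} {e : Sym2 V} (h : Reach G F0 F e) :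
    Inv G F0 F e := by
  induction h with
  | base he hno => exact ⟨hF0, rfl, he, hno, fun i g hg hg0 => absurd hg hg0⟩
  | @step F e f i x y h hf hxy hcut ih =>
    subst hxy
    obtain ⟨hval, htot, heE, hno, hinv7⟩ := ih
    have hclaim := claim_of_inv hmax h ⟨hval, htot, heE, hno, hinv7⟩
    have hef : s(x, y) ∉ (F i).erase f := fun hmem => hno i (Finset.mem_of_mem_erase hmem)
    have hcard : (insert s(x, y) ((F i).erase f)).card = (F i).card := by
      rw [Finset.card_insert_of_notMem hef, Finset.card_erase_of_mem hf]
      have : 0 < (F i).card := Finset.card_pos.2 ⟨f, hf⟩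
      omega
    refine ⟨⟨?_, ?_⟩, ?_, ?_, ?_, ?_⟩
    · -- subsets and forests
      intro j
      by_cases hj : j = i
      · subst hj
        rw [Function.update_self, Finset.coe_insert]
        constructor
        · exact Set.insert_subset heE ((Finset.coe_subset.2 (Finset.erase_subset _ _)).trans
            (hval.1 j).1)
        · refine IsForest.insert_edge ?_ hcut
          exact (hval.1 j).2.mono (by rw [Finset.coe_erase]; exact Set.diff_subset)
      · rw [Function.update_of_ne hj]
        exact hval.1 j
    · -- disjointness
      intro j j' hne e' hej
      by_cases hj : j = i <;> by_cases hj' : j' = i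
      · exact absurd (hj.trans hj'.symm) hne
      · subst hj
        rw [Function.update_of_ne hj']
        rw [Function.update_self, Finset.mem_insert] at hej
        rcases hej with rfl | hej
        · exact hno j'
        · exact hval.2 _ _ hne _ (Finset.mem_of_mem_erase hej)
      · subst hj'
        rw [Function.update_of_ne hj] at hej
        rw [Function.update_self, Finset.mem_insert]
        push_neg
        refine ⟨fun hcontra => hno j (hcontra ▸ hej), ?_⟩
        intro hmem
        exact hval.2 _ _ hne _ hej (Finset.mem_of_mem_erase hmem)
      · rw [Function.update_of_ne hj']
        rw [Function.update_of_ne hj] at hej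
        exact hval.2 _ _ hne _ hej
    · -- total preserved
      have hc1 := total_update (F := F) (i := i) (insert s(x, y) ((F i).erase f))
      rw [hcard] at hc1
      omega
    · -- new active edge is a G-edge
      exact (hval.1 i).1 hf
    · -- new active edge not in family
      intro j
      by_cases hj : j = i
      · subst hj
        rw [Function.update_self, Finset.mem_insert]
        push_neg
        exact ⟨fun hcontra => hno j (hcontra ▸ hf), Finset.notMem_erase _ _⟩
      · rw [Function.update_of_ne hj]
        intro hmem
        exact hval.2 _ _ (fun hcontra => hj hcontra.symm) _ hf hmem
    · -- invariant (i7)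
      intro j g hg hg0 a b hgab
      by_cases hj : j = i
      · subst hj
        rw [Function.update_self, Finset.mem_insert] at hg
        rcases hg with rfl | hg
        · exact hclaim j a b hgab
        · exact hinv7 j _ (Finset.mem_of_mem_erase hg) hg0 a b hgab
      · rw [Function.update_of_ne hj] at hg
        exact hinv7 j _ hg hg0 a b hgab

end Family


section Main

variable {V : Type*} [Fintype V]

lemma conn_to_reachable {G : SimpleGraph V} {S : Set (Sym2 V)} (hS : S ⊆ G.edgeSet)
    {x y : V} (hc : conn S x y) : (SimpleGraph.fromEdgeSet S).Reachable x y := by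
  induction hc with
  | refl => exact SimpleGraph.Reachable.refl _
  | @tail b c _ hbc ih =>
    refine ih.trans (SimpleGraph.Adj.reachable ?_)
    rw [SimpleGraph.fromEdgeSet_adj]
    exact ⟨hbc, ((SimpleGraph.mem_edgeSet _).1 (hS hbc)).ne⟩

/-- The assembled main theorem: a `lam`-edge-connected graph has `lam/2`
pairwise edge-disjoint spanning trees. -/
theorem main_packing (G : SimpleGraph V) (lam : ℕ) (hGconn : G.Connected)
    (hdel : ∀ F : Set (Sym2 V), F.ncard < lam → (G.deleteEdges F).Connected) :
    ∃ T : Fin (lam / 2) → SimpleGraph V,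
      (∀ i, T i ≤ G ∧ (T i).IsTree) ∧
      ∀ i j, i ≠ j → Disjoint (T i).edgeSet (T j).edgeSet := by
  classical
  have hV : Nonempty V := hGconn.nonempty
  set k := lam / 2 with hk
  set n := Fintype.card V with hn
  have hn1 : 1 ≤ n := Fintype.card_pos
  obtain ⟨F0, hF0, hmax⟩ := exists_max_family (G := G) (k := k)
  set A : Set (Sym2 V) := ASet G F0 with hA
  set N := total F0 with hN
  -- active edges are connected in every active forest part
  have hactive : ∀ e ∈ A, ∀ i : Fin k, ∀ x y : V, e = s(x, y) → conn (genSet G F0 i) x y := by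
    rintro e ⟨F, hF⟩ i x y hxy
    exact claim_of_inv hmax hF (reach_inv hF0 hmax hF) i x y hxy
  have hconngen : ∀ i : Fin k, ∀ x y : V, conn A x y ↔ conn (genSet G F0 i) x y := by
    intro i x y
    constructor
    · intro h
      exact h.elim (fun a b hab => hactive _ hab i a b rfl)
    · intro h
      exact h.mono (fun g hg => hg.2)
  set c := ccount A with hc
  set Gi : Fin k → Finset (Sym2 V) := fun i => (F0 i).filter (· ∈ A) with hGi
  have hGicoe : ∀ i, (↑(Gi i) : Set (Sym2 V)) = genSet G F0 i := by
    intro i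
    ext e
    simp [hGi, genSet, ASet, hA]
  have hGin : ∀ i, n ≤ c + (Gi i).card := by
    intro i
    have h1 := card_le_ccount_add_card (Gi i)
    rwa [hGicoe i, ← ccount_congr (hconngen i), ← hc, ← hn] at h1
  -- crossing edges
  set E0 : Finset (Sym2 V) := (G.edgeSet).toFinite.toFinset with hE0
  have hE0mem : ∀ e, e ∈ E0 ↔ e ∈ G.edgeSet := fun e => Set.Finite.mem_toFinset _
  set Cr : Sym2 V → Prop := fun e => ∃ x y, e = s(x, y) ∧ ¬ conn A x y with hCr
  have hCr_iff : ∀ x y : V, Cr s(x, y) ↔ ¬ conn A x y := by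
    intro x y
    constructor
    · rintro ⟨x', y', heq, hnc⟩ hcon
      rcases Sym2.eq_iff.1 heq with ⟨rfl, rfl⟩ | ⟨rfl, rfl⟩
      · exact hnc hcon
      · exact hnc hcon.symm
    · intro h
      exact ⟨x, y, rfl, h⟩
  set X : Finset (Sym2 V) := E0.filter Cr with hX
  -- every crossing edge is used by the family
  have hXmem : ∀ e ∈ X, ∃ i, e ∈ F0 i := by
    intro e he
    rw [hX, Finset.mem_filter] at he
    by_contra hno
    push_neg at hno
    have heA : e ∈ A := ⟨F0, Reach.base ((hE0mem e).1 he.1) hno⟩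
    obtain ⟨x, y, heq, hnc⟩ := he.2
    rw [heq] at heA
    exact hnc (conn.step heA)
  -- active edges are not crossing
  have hGiX : ∀ i, Disjoint ((F0 i).filter Cr) (Gi i) := by
    intro i
    rw [Finset.disjoint_left]
    intro e he1 he2
    rw [Finset.mem_filter] at he1 he2
    obtain ⟨x, y, heq, hnc⟩ := he1.2
    have h22 := he2.2
    rw [heq] at h22
    exact hnc (conn.step h22)
  have hsplit : ∀ i, ((F0 i).filter Cr).card + (Gi i).card ≤ (F0 i).card := by
    intro i
    rw [← Finset.card_union_of_disjoint (hGiX i)]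
    apply Finset.card_le_card
    intro e he
    rcases Finset.mem_union.1 he with h | h
    · exact (Finset.mem_filter.1 h).1
    · exact (Finset.mem_filter.1 h).1
  have hXcard : X.card ≤ ∑ i : Fin k, ((F0 i).filter Cr).card := by
    refine le_trans (Finset.card_le_card ?_) (Finset.card_biUnion_le)
    intro e he
    rw [Finset.mem_biUnion]
    obtain ⟨i, hi⟩ := hXmem e he
    exact ⟨i, Finset.mem_univ i, Finset.mem_filter.2 ⟨hi, (Finset.mem_filter.1 he).2⟩⟩
  have hcount1 : X.card + (∑ i : Fin k, (Gi i).card) ≤ N := by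
    have h2 : ∑ i : Fin k, (((F0 i).filter Cr).card + (Gi i).card) ≤ N := by
      rw [hN]
      exact Finset.sum_le_sum (fun i _ => hsplit i)
    rw [Finset.sum_add_distrib] at h2
    omega
  have hcount2 : k * n ≤ k * c + ∑ i : Fin k, (Gi i).card := by
    have h1 : ∑ _i : Fin k, n ≤ ∑ i : Fin k, (c + (Gi i).card) :=
      Finset.sum_le_sum (fun i _ => hGin i)
    rw [Finset.sum_add_distrib, Finset.sum_const, Finset.sum_const] at h1
    simpa [mul_comm] using h1
  -- the cut bound
  have hS1 : k * c ≤ X.card + k := by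
    by_cases h2c : 2 ≤ c
    · -- quotient structure
      letI : Fintype (Quotient (connSetoid A)) := Fintype.ofFinite _
      set Q := Quotient (connSetoid A) with hQ
      have hcQ : c = Fintype.card Q := by
        rw [hc]
        unfold ccount
        exact Nat.card_eq_fintype_card
      set P : Sym2 V → Q → Prop := fun e q =>
        ∃ x y, e = s(x, y) ∧ Quotient.mk (connSetoid A) x = q ∧
          Quotient.mk (connSetoid A) y ≠ q with hP
      set cut : Q → Finset (Sym2 V) := fun q => E0.filter (fun e => P e q) with hcut
      have hcut_lam : ∀ q, lam ≤ (cut q).card := by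
        intro q
        by_contra hlt
        push_neg at hlt
        have hconn' := hdel (↑(cut q)) (by rwa [Set.ncard_coe_finset])
        obtain ⟨a, ha⟩ := Quotient.exists_rep q
        have hex : ∃ b : V, Quotient.mk (connSetoid A) b ≠ q := by
          by_contra hall
          push_neg at hall
          have hallq : ∀ r : Q, r = q := by
            intro r
            obtain ⟨b, hb⟩ := Quotient.exists_rep r
            rw [← hb]
            exact hall b
          have hsub : Subsingleton Q := ⟨fun r r' => by rw [hallq r, hallq r']⟩
          have h1 : Nat.card Q = 1 := Nat.card_eq_one_iff_unique.2 ⟨hsub, ⟨q⟩⟩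
          have : c = 1 := by rw [hc]; unfold ccount; exact h1
          omega
        obtain ⟨b, hb⟩ := hex
        obtain ⟨p⟩ := hconn'.preconnected a b
        obtain ⟨d, _, hdS, hdnS⟩ :=
          p.exists_boundary_dart {v : V | Quotient.mk (connSetoid A) v = q} (by simpa [ha]) hb
        have hadj := d.adj
        rw [SimpleGraph.deleteEdges_adj] at hadj
        apply hadj.2
        exact Finset.mem_coe.2 (Finset.mem_filter.2
          ⟨(hE0mem _).2 ((SimpleGraph.mem_edgeSet _).2 hadj.1),
            ⟨d.fst, d.snd, rfl, hdS, hdnS⟩⟩)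
      -- double counting
      have hdouble : ∑ q : Q, (cut q).card = 2 * X.card := by
        have h1 : ∀ q : Q, (cut q).card = ∑ e ∈ E0, if P e q then 1 else 0 := by
          intro q
          rw [hcut]
          exact Finset.card_filter _ _
        calc ∑ q : Q, (cut q).card = ∑ q : Q, ∑ e ∈ E0, if P e q then 1 else 0 :=
              Finset.sum_congr rfl (fun q _ => h1 q)
          _ = ∑ e ∈ E0, ∑ q : Q, if P e q then 1 else 0 := Finset.sum_comm
          _ = ∑ e ∈ E0, (if Cr e then 2 else 0) := by
              refine Finset.sum_congr rfl (fun e he => ?_)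
              induction e using Sym2.inductionOn with
              | hf x y =>
                by_cases hcon : conn A x y
                · have hPno : ∀ q : Q, ¬ P s(x, y) q := by
                    rintro q ⟨x', y', heq, hq1, hq2⟩
                    have hxy' : Quotient.mk (connSetoid A) x' = Quotient.mk (connSetoid A) y' := by
                      rcases Sym2.eq_iff.1 heq with ⟨rfl, rfl⟩ | ⟨rfl, rfl⟩
                      · exact Quotient.sound hcon
                      · exact Quotient.sound hcon.symm
                    exact hq2 (hxy' ▸ hq1)
                  rw [if_neg (fun hcr => ((hCr_iff x y).1 hcr) hcon)]
                  rw [Finset.sum_eq_zero]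
                  intro q _
                  rw [if_neg (hPno q)]
                · have hPiff : ∀ q : Q, P s(x, y) q ↔
                      (q = Quotient.mk (connSetoid A) x ∨ q = Quotient.mk (connSetoid A) y) := by
                    intro q
                    constructor
                    · rintro ⟨x', y', heq, hq1, hq2⟩
                      rcases Sym2.eq_iff.1 heq with ⟨rfl, rfl⟩ | ⟨rfl, rfl⟩
                      · exact Or.inl hq1.symm
                      · exact Or.inr hq1.symm
                    · rintro (rfl | rfl)
                      · exact ⟨x, y, rfl, rfl, fun h => hcon (Quotient.exact h).symm⟩
                      · exact ⟨y, x, Sym2.eq_swap.symm, rfl, fun h => hcon (Quotient.exact h)⟩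
                  have hne : Quotient.mk (connSetoid A) x ≠ Quotient.mk (connSetoid A) y :=
                    fun h => hcon (Quotient.exact h)
                  rw [if_pos ((hCr_iff x y).2 hcon)]
                  have : ∑ q : Q, (if P s(x, y) q then 1 else 0) =
                      ∑ q : Q, (if q = Quotient.mk (connSetoid A) x ∨
                        q = Quotient.mk (connSetoid A) y then 1 else 0) :=
                    Finset.sum_congr rfl (fun q _ => by simp only [hPiff q])
                  have hfilter : Finset.univ.filter (fun q : Q =>
                      q = Quotient.mk (connSetoid A) x ∨ q = Quotient.mk (connSetoid A) y) =
                      {Quotient.mk (connSetoid A) x, Quotient.mk (connSetoid A) y} := by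
                    ext r
                    simp
                  have hsum2 : ∑ q : Q, (if q = Quotient.mk (connSetoid A) x ∨
                      q = Quotient.mk (connSetoid A) y then 1 else 0) = 2 := by
                    rw [← Finset.card_filter, hfilter,
                      Finset.card_insert_of_notMem (by simp only [Finset.mem_singleton]; exact hne),
                      Finset.card_singleton]
                  rw [this, hsum2]
          _ = 2 * X.card := by
              rw [hX, Finset.sum_ite, Finset.sum_const, Finset.sum_const]
              simp [mul_comm]
      have h2k : 2 * k ≤ lam := by omega
      have hQlam : Fintype.card Q * lam ≤ 2 * X.card := by
        rw [← hdouble]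
        calc Fintype.card Q * lam = ∑ _q : Q, lam := by rw [Finset.sum_const, smul_eq_mul, Finset.card_univ]
          _ ≤ ∑ q : Q, (cut q).card := Finset.sum_le_sum (fun q _ => hcut_lam q)
      have h3 : 2 * (k * c) ≤ 2 * X.card := by
        calc 2 * (k * c) = c * (2 * k) := by ring
          _ ≤ c * lam := Nat.mul_le_mul_left c h2k
          _ = Fintype.card Q * lam := by rw [hcQ]
          _ ≤ 2 * X.card := hQlam
      have := Nat.le_of_mul_le_mul_left h3 (by norm_num)
      omega
    · push_neg at h2c
      have hc1 : c ≤ 1 := by omega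
      have : k * c ≤ k * 1 := Nat.mul_le_mul_left k hc1
      omega
  -- conclude N + k ≥ k * n
  have hNk : k * n ≤ N + k := by
    calc k * n ≤ k * c + ∑ i : Fin k, (Gi i).card := hcount2
      _ ≤ (X.card + k) + ∑ i : Fin k, (Gi i).card := by
          exact Nat.add_le_add_right hS1 _
      _ = (X.card + ∑ i : Fin k, (Gi i).card) + k := by ring
      _ ≤ N + k := Nat.add_le_add_right hcount1 _
  -- each forest is a spanning tree
  have hci : ∀ i : Fin k, ccount (↑(F0 i) : Set (Sym2 V)) + (F0 i).card = n :=
    fun i => forest_ccount_add_card (F0 i) (hF0.1 i).2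
  have hcipos : ∀ i : Fin k, 1 ≤ ccount (↑(F0 i) : Set (Sym2 V)) :=
    fun i => ccount_pos _
  have hsumsplit : ∑ i : Fin k, (ccount (↑(F0 i) : Set (Sym2 V)) + (F0 i).card) = k * n := by
    rw [Finset.sum_congr rfl (fun i _ => hci i), Finset.sum_const, Finset.card_univ]
    simp [mul_comm]
  rw [Finset.sum_add_distrib] at hsumsplit
  have hsumN : ∑ i : Fin k, (F0 i).card = N := rfl
  have hccsum : ∑ i : Fin k, ccount (↑(F0 i) : Set (Sym2 V)) ≤ k := by omega
  have hccone : ∀ i : Fin k, ccount (↑(F0 i) : Set (Sym2 V)) = 1 := by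
    have h1 : ∑ _i : Fin k, 1 ≤ ∑ i : Fin k, ccount (↑(F0 i) : Set (Sym2 V)) :=
      Finset.sum_le_sum (fun i _ => hcipos i)
    have h2 : ∑ _i : Fin k, (1:ℕ) = k := by simp
    have heq : ∑ i : Fin k, (1:ℕ) = ∑ i : Fin k, ccount (↑(F0 i) : Set (Sym2 V)) := by omega
    have := (Finset.sum_eq_sum_iff_of_le (fun i _ => hcipos i)).1 heq
    intro i
    exact (this i (Finset.mem_univ i)).symm
  -- build the trees
  refine ⟨fun i => SimpleGraph.fromEdgeSet (↑(F0 i) : Set (Sym2 V)), fun i => ⟨?_, ?_, ?_⟩, ?_⟩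
  · -- T i ≤ G
    intro v w hvw
    rw [SimpleGraph.fromEdgeSet_adj] at hvw
    exact (SimpleGraph.mem_edgeSet _).1 ((hF0.1 i).1 hvw.1)
  · -- connected
    rw [SimpleGraph.connected_iff]
    refine ⟨fun x y => ?_, hV⟩
    exact conn_to_reachable (hF0.1 i).1 (conn_of_ccount_eq_one (hccone i) x y)
  · -- acyclic
    rw [SimpleGraph.isAcyclic_iff_forall_edge_isBridge]
    intro e he
    rw [SimpleGraph.edgeSet_fromEdgeSet] at he
    induction e using Sym2.inductionOn with
    | hf x y =>
      have hxyne : x ≠ y := fun h => he.2 (by simp [h])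
      have hmem : s(x, y) ∈ F0 i := he.1
      rw [SimpleGraph.isBridge_iff]
      · intro hreach
        have hrtg := (SimpleGraph.reachable_iff_reflTransGen _ _).1 hreach
        have hcon : conn ((↑(F0 i) : Set (Sym2 V)) \ {s(x, y)}) x y := by
          refine Relation.ReflTransGen.mono ?_ _ _ hrtg
          intro a b hab
          rw [SimpleGraph.deleteEdges, SimpleGraph.sdiff_adj, SimpleGraph.fromEdgeSet_adj,
            SimpleGraph.fromEdgeSet_adj] at hab
          refine ⟨hab.1.1, ?_⟩
          simp only [Set.mem_singleton_iff]
          intro hcontra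
          exact hab.2 ⟨by rw [hcontra]; exact Set.mem_singleton _, hab.1.2⟩
        exact (hF0.1 i).2 x y hmem hcon
  · -- disjoint edge sets
    intro i j hij
    rw [Set.disjoint_left]
    intro e hei hej
    rw [SimpleGraph.edgeSet_fromEdgeSet] at hei hej
    exact hF0.2 i j hij e hei.1 hej.1

end Main

end NWPack


/-- `G` is `lam`-edge-connected: it is connected and stays connected after
deleting any set of fewer than `lam` edges. -/
def IsEdgeConnected {V : Type*} (G : SimpleGraph V) (lam : ℕ) : Prop :=
  G.Connected ∧ ∀ F : Set (Sym2 V), F.ncard < lam → (G.deleteEdges F).Connected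

/-- Tutte/Nash-Williams: a graph with edge connectivity `λ` contains at least
`⌈(λ−1)/2⌉ = ⌊λ/2⌋` pairwise edge-disjoint spanning trees. -/
theorem stmt11 {V : Type*} [Fintype V] (G : SimpleGraph V) (lam : ℕ)
    (hconn : IsEdgeConnected G lam) :
    ∃ T : Fin (lam / 2) → SimpleGraph V,
      (∀ i, T i ≤ G ∧ (T i).IsTree) ∧
      ∀ i j, i ≠ j → Disjoint (T i).edgeSet (T j).edgeSet :=
  NWPack.main_packing G lam hconn.1 hconn.2
end
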